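/- arXiv:1602.04700 — 10 statements merged into one kernel-verified Lean document; each statement's English description precedes it below -/
import Mathlib

section
/- If Φ : X → [0,∞] is proper, convex, lower semicontinuous, strictly convex on its domain, positively homogeneous of degree p, and has compact sublevel sets, then there exists w ∈ X \ {0} achieving λ_p := inf{ pΦ(u)/‖u‖^p : u ≠ 0 }, and λ_p > 0. -/
open Filter Set MeasureTheory Topology
open scoped ENNReal NNReal

noncomputable section

variable {X : Type*} [NormedAddCommGroup X] [NormedSpace ℝ X] [CompleteSpace X]

/-- Subdifferential of an `EReal`-valued functional `Φ` at `u`. -/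
def ERealSubdiff (Φ : X → EReal) (u : X) : Set (X →L[ℝ] ℝ) :=
  {ξ | ∀ w : X, Φ u + ((ξ (w - u) : ℝ) : EReal) ≤ Φ w}

/-- The duality map `J_p`: the subdifferential of `‖·‖^p / p` at `u`. -/
def Jdual (p : ℝ) (u : X) : Set (X →L[ℝ] ℝ) :=
  {ξ | ∀ w : X, ‖u‖ ^ p / p + ξ (w - u) ≤ ‖w‖ ^ p / p}

/-- Convexity for an `EReal`-valued functional. -/
def IsConvexE (Φ : X → EReal) : Prop :=
  ∀ u v : X, ∀ a b : ℝ, 0 ≤ a → 0 ≤ b → a + b = 1 →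
    Φ (a • u + b • v) ≤ (a : EReal) * Φ u + (b : EReal) * Φ v

/-- Strict convexity on the domain `{Φ < ∞}`. -/
def IsStrictConvexOnDom (Φ : X → EReal) : Prop :=
  ∀ u v : X, Φ u ≠ ⊤ → Φ v ≠ ⊤ → u ≠ v → ∀ a b : ℝ, 0 < a → 0 < b → a + b = 1 →
    Φ (a • u + b • v) < (a : EReal) * Φ u + (b : EReal) * Φ v

/-- Positive homogeneity of degree `p`. -/
def IsHomog (Φ : X → EReal) (p : ℝ) : Prop :=
  ∀ t : ℝ, 0 ≤ t → ∀ u : X, Φ (t • u) = ((t ^ p : ℝ) : EReal) * Φ u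

/-- The set of Rayleigh quotients `p Φ(u)/‖u‖^p` over nonzero `u` in the domain. -/
def RayleighSet (Φ : X → EReal) (p : ℝ) : Set ℝ :=
  {r | ∃ u : X, u ≠ 0 ∧ Φ u ≠ ⊤ ∧ r = p * (Φ u).toReal / ‖u‖ ^ p}

/-- Simplicity of the least Rayleigh quotient `lam`. -/
def IsSimple (Φ : X → EReal) (p lam : ℝ) : Prop :=
  ∀ u v : X, u ≠ 0 → v ≠ 0 → Φ u ≠ ⊤ → Φ v ≠ ⊤ →
    lam = p * (Φ u).toReal / ‖u‖ ^ p → lam = p * (Φ v).toReal / ‖v‖ ^ p →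
    ∃ c : ℝ, v = c • u

/-- `P_w(u)`: best approximations of `u` from the ray `{β w : β ≥ 0}`. -/
def ProjRay (w u : X) : Set X :=
  {x | ∃ α : ℝ, 0 ≤ α ∧ x = α • w ∧ ∀ β : ℝ, 0 ≤ β → ‖u - α • w‖ ≤ ‖u - β • w‖}

/-- `α_w(u) := inf {α > 0 : α w ∈ P_w(u)}`. -/
def alphaRay (w u : X) : ℝ :=
  sInf {α : ℝ | 0 < α ∧ α • w ∈ ProjRay w u}

/-- Local absolute continuity of a path on `[0, ∞)`. -/
def LocAC {E : Type*} [NormedAddCommGroup E] (v : ℝ → E) : Prop :=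
  ∀ T : ℝ, 0 < T → ∃ h : ℝ → ℝ, IntegrableOn h (Icc 0 T) ∧
    ∀ s t : ℝ, 0 ≤ s → s ≤ t → t ≤ T → ‖v t - v s‖ ≤ ∫ τ in Icc s t, h τ

/-- `m` is the metric derivative of `v` (a.e. on `(0,∞)`). -/
def HasMetricDeriv {E : Type*} [NormedAddCommGroup E] (v : ℝ → E) (m : ℝ → ℝ) : Prop :=
  ∀ᵐ t ∂(volume.restrict (Ioi (0:ℝ))),
    Tendsto (fun h : ℝ => ‖v (t + h) - v t‖ / |h|) (𝓝[≠] 0) (𝓝 (m t))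

/-- Local slope `|∂Φ|(u) = limsup_{z → 0} (Φ(u) − Φ(u+z))⁺ / ‖z‖`, valued in `[0,∞]`. -/
def localSlope (Φ : X → EReal) (u : X) : ℝ≥0∞ :=
  Filter.limsup (fun z : X => ENNReal.ofReal ((Φ u - Φ (u + z)).toReal / ‖z‖)) (𝓝[≠] (0 : X))

/-- `v` is a `p`-curve of maximal slope for `Φ`, with metric derivative `m` and with
`φ` a real-valued a.e.-differentiable representative of `Φ ∘ v`; the defining inequality
`(Φ ∘ v)' ≤ -m^p/p - |∂Φ|(v)^q/q` holds a.e. on `(0,∞)`. -/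
def IsPCurve (Φ : X → EReal) (p q : ℝ) (v : ℝ → X) (m : ℝ → ℝ) (φ : ℝ → ℝ) : Prop :=
  LocAC v ∧ HasMetricDeriv v m ∧ (∀ t : ℝ, 0 ≤ t → (φ t : EReal) = Φ (v t)) ∧
  ∀ᵐ t ∂(volume.restrict (Ioi (0:ℝ))),
    ∃ d : ℝ, HasDerivAt φ d t ∧ d ≤ 0 ∧
      ENNReal.ofReal (m t ^ p / p) + localSlope Φ (v t) ^ q / ENNReal.ofReal q ≤
        ENNReal.ofReal (-d)


lemma EReal.ne_bot_of_nonneg' {x : EReal} (h : (0:EReal) ≤ x) : x ≠ ⊥ := by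
  intro hb; rw [hb] at h; exact absurd h (by simp)

lemma EReal.toReal_nonneg' {x : EReal} (h : (0:EReal) ≤ x) : 0 ≤ x.toReal := by
  rcases eq_or_ne x ⊤ with rfl | hT
  · simp
  · have := EReal.toReal_le_toReal h (by simp) hT
    simpa using this

lemma phi_zero' {X : Type*} [NormedAddCommGroup X] [NormedSpace ℝ X]
    (Φ : X → EReal) (p : ℝ) (hp : 1 < p) (hhom : IsHomog Φ p)
    (hproper : ∃ u : X, u ≠ 0 ∧ Φ u ≠ ⊤) : Φ 0 = 0 := by
  obtain ⟨u, -, -⟩ := hproper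
  have h := hhom 0 le_rfl u
  rw [zero_smul, Real.zero_rpow (by linarith : p ≠ 0)] at h
  simpa using h

lemma rayleigh_norm' {X : Type*} [NormedAddCommGroup X] [NormedSpace ℝ X]
    (Φ : X → EReal) (p : ℝ) (hp : 1 < p) (hnn : ∀ x : X, (0 : EReal) ≤ Φ x)
    (hhom : IsHomog Φ p) (u : X) (hu : u ≠ 0) (huT : Φ u ≠ ⊤) :
    ∃ v : X, ‖v‖ = 1 ∧ Φ v ≠ ⊤ ∧
      p * (Φ u).toReal / ‖u‖ ^ p = p * (Φ v).toReal := by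
  have hnorm : (0:ℝ) < ‖u‖ := norm_pos_iff.mpr hu
  have hinv : (0:ℝ) ≤ ‖u‖⁻¹ := inv_nonneg.mpr hnorm.le
  set c : ℝ := ‖u‖⁻¹ ^ p with hc
  have hcval : c = (‖u‖ ^ p)⁻¹ := by rw [hc, Real.inv_rpow hnorm.le]
  have hgu : ((Φ u).toReal : EReal) = Φ u :=
    EReal.coe_toReal huT (EReal.ne_bot_of_nonneg' (hnn u))
  have hΦv : Φ (‖u‖⁻¹ • u) = ((c * (Φ u).toReal : ℝ) : EReal) := by
    calc Φ (‖u‖⁻¹ • u) = ((c : ℝ) : EReal) * Φ u := hhom ‖u‖⁻¹ hinv u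
      _ = ((c : ℝ) : EReal) * (((Φ u).toReal : ℝ) : EReal) := by rw [hgu]
      _ = ((c * (Φ u).toReal : ℝ) : EReal) := (EReal.coe_mul _ _).symm
  refine ⟨‖u‖⁻¹ • u, norm_smul_inv_norm hu, ?_, ?_⟩
  · rw [hΦv]; exact EReal.coe_ne_top _
  · rw [hΦv, EReal.toReal_coe, hcval]
    have hup : (0:ℝ) < ‖u‖ ^ p := Real.rpow_pos_of_pos hnorm p
    field_simp

theorem minimizer_exists (Φ : X → EReal) (p : ℝ) (hp : 1 < p)
    (hnn : ∀ x : X, (0 : EReal) ≤ Φ x)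
    (hproper : ∃ u : X, u ≠ 0 ∧ Φ u ≠ ⊤)
    (hconv : IsConvexE Φ) (hsc : IsStrictConvexOnDom Φ)
    (hlsc : LowerSemicontinuous Φ) (hhom : IsHomog Φ p)
    (hcs : ∀ c : ℝ, IsCompact {x : X | Φ x ≤ (c : EReal)}) :
    ∃ w : X, w ≠ 0 ∧ Φ w ≠ ⊤ ∧
      sInf (RayleighSet Φ p) = p * (Φ w).toReal / ‖w‖ ^ p ∧
      0 < sInf (RayleighSet Φ p) := by
  have hp0 : (0:ℝ) < p := by linarith
  have hΦ0 : Φ 0 = 0 := phi_zero' Φ p hp hhom hproper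
  have key : ∀ r ∈ RayleighSet Φ p, (0:ℝ) ≤ r := by
    rintro r ⟨u, hu0, huT, rfl⟩
    have h1 : 0 ≤ (Φ u).toReal := EReal.toReal_nonneg' (hnn u)
    have h2 : (0:ℝ) < ‖u‖ ^ p := Real.rpow_pos_of_pos (norm_pos_iff.mpr hu0) p
    positivity
  have hbdd : BddBelow (RayleighSet Φ p) := ⟨0, key⟩
  have hne : (RayleighSet Φ p).Nonempty := by
    obtain ⟨u, hu0, huT⟩ := hproper
    exact ⟨_, u, hu0, huT, rfl⟩
  set lam := sInf (RayleighSet Φ p) with hlamdef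
  have hlam0 : 0 ≤ lam := le_csInf hne key
  have hseq : ∀ n : ℕ, ∃ v : X, ‖v‖ = 1 ∧ Φ v ≠ ⊤ ∧
      p * (Φ v).toReal < lam + 1/(n+1) := by
    intro n
    have hpos : (0:ℝ) < 1/(n+1) := by positivity
    obtain ⟨r, hr, hrlt⟩ := exists_lt_of_csInf_lt hne (by linarith : lam < lam + 1/(n+1))
    obtain ⟨u, hu0, huT, rfl⟩ := hr
    obtain ⟨v, hv1, hvT, hveq⟩ := rayleigh_norm' Φ p hp hnn hhom u hu0 huT
    exact ⟨v, hv1, hvT, hveq ▸ hrlt⟩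
  choose u hu1 huT hult using hseq
  have hubot : ∀ n, Φ (u n) ≠ ⊥ := fun n => EReal.ne_bot_of_nonneg' (hnn (u n))
  have hmem : ∀ n, u n ∈ {x : X | Φ x ≤ (((lam+1)/p : ℝ) : EReal)} := by
    intro n
    have h1 : (1:ℝ)/(n+1) ≤ 1 := by
      rw [div_le_one (by positivity)]; push_cast; linarith
    have h2 : p * (Φ (u n)).toReal ≤ lam + 1 := le_trans (hult n).le (by linarith)
    have h3 : (Φ (u n)).toReal ≤ (lam+1)/p := by
      rw [le_div_iff₀ hp0]; linarith
    calc Φ (u n) = (((Φ (u n)).toReal : ℝ) : EReal) :=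
          (EReal.coe_toReal (huT n) (hubot n)).symm
      _ ≤ (((lam+1)/p : ℝ) : EReal) := EReal.coe_le_coe_iff.mpr h3
  obtain ⟨w, hwK, φ, hφ, hcv⟩ := (hcs ((lam+1)/p)).isSeqCompact hmem
  have hw1 : ‖w‖ = 1 := by
    have h1 : Tendsto (fun n => ‖(u ∘ φ) n‖) atTop (𝓝 ‖w‖) := hcv.norm
    have h2 : (fun n => ‖(u ∘ φ) n‖) = fun _ => (1:ℝ) := by
      funext n; exact hu1 (φ n)
    rw [h2] at h1
    exact tendsto_nhds_unique h1 tendsto_const_nhds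
  have hw0 : w ≠ 0 := by
    intro h; rw [h, norm_zero] at hw1; norm_num at hw1
  have hwT : Φ w ≠ ⊤ := ne_top_of_le_ne_top (EReal.coe_ne_top _) hwK
  have hwbot : Φ w ≠ ⊥ := EReal.ne_bot_of_nonneg' (hnn w)
  have hkey : Φ w ≤ ((lam/p : ℝ) : EReal) := by
    by_contra hcon
    push_neg at hcon
    set g := (Φ w).toReal with hgdef
    have hgw : Φ w = (g : EReal) := (EReal.coe_toReal hwT hwbot).symm
    have hg : lam/p < g := by
      rw [hgw] at hcon; exact_mod_cast hcon
    set y := (lam/p + g)/2 with hydef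
    have hy1 : lam/p < y := by rw [hydef]; linarith
    have hy2 : ((y:ℝ):EReal) < Φ w := by
      rw [hgw]; exact_mod_cast (by rw [hydef]; linarith : y < g)
    have hev := hcv.eventually (hlsc w y hy2)
    have hyle : ∀ᶠ n in atTop, y ≤ (lam + 1/((φ n : ℝ)+1))/p := by
      filter_upwards [hev] with n hn
      have h1 : ((y:ℝ):EReal) < (((Φ (u (φ n))).toReal : ℝ) : EReal) := by
        rwa [EReal.coe_toReal (huT (φ n)) (hubot (φ n))]
      have h2 : y < (Φ (u (φ n))).toReal := by exact_mod_cast h1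
      have h3 := hult (φ n)
      rw [le_div_iff₀ hp0]
      nlinarith
    have ht : Tendsto (fun n => (lam + 1/((φ n : ℝ)+1))/p) atTop (𝓝 (lam/p)) := by
      have h0 : Tendsto (fun n : ℕ => lam + 1/((n:ℝ)+1)) atTop (𝓝 (lam + 0)) :=
        tendsto_const_nhds.add tendsto_one_div_add_atTop_nhds_zero_nat
      have h1 : Tendsto (fun n : ℕ => (lam + 1/((n:ℝ)+1))/p) atTop (𝓝 ((lam+0)/p)) :=
        h0.div_const p
      have h2 := h1.comp hφ.tendsto_atTop
      simpa [Function.comp_def] using h2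
    have := ge_of_tendsto ht hyle
    linarith
  have hgle : p * (Φ w).toReal ≤ lam := by
    have h1 := EReal.toReal_le_toReal hkey hwbot (EReal.coe_ne_top _)
    rw [EReal.toReal_coe] at h1
    have h2 := mul_le_mul_of_nonneg_left h1 hp0.le
    rwa [mul_div_cancel₀ _ (ne_of_gt hp0)] at h2
  have hray : p * (Φ w).toReal / ‖w‖ ^ p = p * (Φ w).toReal := by
    rw [hw1, Real.one_rpow, div_one]
  have hge : lam ≤ p * (Φ w).toReal / ‖w‖ ^ p := csInf_le hbdd ⟨w, hw0, hwT, rfl⟩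
  have heq : lam = p * (Φ w).toReal / ‖w‖ ^ p :=
    le_antisymm hge (by rw [hray]; exact hgle)
  have hpos : 0 < lam := by
    rcases lt_or_eq_of_le hlam0 with h | h
    · exact h
    · exfalso
      have hg0 : (Φ w).toReal = 0 := by
        have h1 : 0 ≤ (Φ w).toReal := EReal.toReal_nonneg' (hnn w)
        nlinarith
      have hΦw : Φ w = 0 := by
        rw [← EReal.coe_toReal hwT hwbot, hg0]; exact EReal.coe_zero
      have h0T : Φ (0:X) ≠ ⊤ := by rw [hΦ0]; exact EReal.zero_ne_top
      have hstr := hsc w 0 hwT h0T hw0 (1/2) (1/2) (by norm_num) (by norm_num)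
        (by norm_num)
      rw [hΦw, hΦ0] at hstr
      simp only [mul_zero, add_zero] at hstr
      exact absurd hstr (not_lt.mpr (hnn _))
  exact ⟨w, hw0, hwT, heq, heq ▸ hpos⟩
end
end

section
/- A nonzero element w ∈ X satisfies λ_p = pΦ(w)/‖w‖^p if and only if there exist ζ ∈ ∂Φ(w) and ξ ∈ J_p(w) with ζ = λ_p ξ, i.e. ∂Φ(w) ∩ λ_p J_p(w) ≠ ∅. -/
open Filter Set MeasureTheory Topology
open scoped ENNReal NNReal

noncomputable section

variable {X : Type*} [NormedAddCommGroup X] [NormedSpace ℝ X] [CompleteSpace X]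

lemma jdual_exists' (p : ℝ) (hp : 1 < p) (w : X) (hw : w ≠ 0) :
    ∃ ξ : X →L[ℝ] ℝ, ξ ∈ Jdual p w ∧ ξ w = ‖w‖ ^ p := by
  obtain ⟨g, hg1, hgw⟩ := exists_dual_vector ℝ w (norm_ne_zero_iff.mpr hw)
  have hgw' : g w = ‖w‖ := by exact_mod_cast hgw
  have hpq : p.HolderConjugate (p / (p - 1)) := Real.HolderConjugate.conjExponent hp
  set q : ℝ := p / (p - 1)
  have hwn : (0:ℝ) < ‖w‖ := norm_pos_iff.mpr hw
  have hpow : ‖w‖ ^ (p - 1) * ‖w‖ = ‖w‖ ^ p := by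
    rw [← Real.rpow_add_one hwn.ne' (p - 1), sub_add_cancel]
  have hxw : ((‖w‖ ^ (p - 1)) • g) w = ‖w‖ ^ p := by
    rw [ContinuousLinearMap.smul_apply, hgw', smul_eq_mul, hpow]
  refine ⟨(‖w‖ ^ (p - 1)) • g, ?_, hxw⟩
  intro u
  have hbound : g u ≤ ‖u‖ := by
    calc g u ≤ ‖g u‖ := le_abs_self _
      _ ≤ ‖g‖ * ‖u‖ := g.le_opNorm u
      _ = ‖u‖ := by rw [hg1, one_mul]
  have happ : ((‖w‖ ^ (p - 1)) • g) (u - w) = ‖w‖ ^ (p - 1) * g u - ‖w‖ ^ p := by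
    rw [ContinuousLinearMap.smul_apply, map_sub, hgw', smul_eq_mul, mul_sub, hpow]
  rw [happ]
  have hyoung : ‖u‖ * ‖w‖ ^ (p - 1) ≤ ‖u‖ ^ p / p + (‖w‖ ^ (p - 1)) ^ q / q :=
    Real.young_inequality_of_nonneg (norm_nonneg u) (Real.rpow_nonneg hwn.le _) hpq
  have hwq : (‖w‖ ^ (p - 1)) ^ q = ‖w‖ ^ p := by
    rw [← Real.rpow_mul hwn.le, hpq.sub_one_mul_conj]
  rw [hwq] at hyoung
  rw [mul_comm] at hyoung
  have hsum : ‖w‖ ^ p / p + ‖w‖ ^ p / q = ‖w‖ ^ p := by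
    rw [div_eq_mul_inv, div_eq_mul_inv, ← mul_add, hpq.inv_add_inv_eq_one, mul_one]
  have hmul : ‖w‖ ^ (p - 1) * g u ≤ ‖w‖ ^ (p - 1) * ‖u‖ :=
    mul_le_mul_of_nonneg_left hbound (Real.rpow_nonneg hwn.le _)
  linarith

theorem minimizer_iff_eigen (Φ : X → EReal) (p lam : ℝ) (hp : 1 < p)
    (hnn : ∀ x : X, (0 : EReal) ≤ Φ x)
    (hconv : IsConvexE Φ) (hsc : IsStrictConvexOnDom Φ)
    (hlsc : LowerSemicontinuous Φ) (hhom : IsHomog Φ p)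
    (hcs : ∀ c : ℝ, IsCompact {x : X | Φ x ≤ (c : EReal)})
    (hlam : lam = sInf (RayleighSet Φ p)) (hpos : 0 < lam)
    (w : X) (hw : w ≠ 0) :
    ((p : ℝ) : EReal) * Φ w = ((lam * ‖w‖ ^ p : ℝ) : EReal) ↔
      ∃ ξ : X →L[ℝ] ℝ, ξ ∈ Jdual p w ∧ lam • ξ ∈ ERealSubdiff Φ w := by
  have hp0 : (0:ℝ) < p := lt_trans zero_lt_one hp
  have hwn : (0:ℝ) < ‖w‖ := norm_pos_iff.mpr hw
  -- Φ 0 = 0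
  have hΦ0 : Φ 0 = 0 := by
    have h := hhom 0 le_rfl 0
    rw [smul_zero] at h
    rw [Real.zero_rpow hp0.ne'] at h
    simpa using h
  -- lower bound
  have hlb : ∀ u : X, Φ u ≠ ⊤ → lam * ‖u‖ ^ p / p ≤ (Φ u).toReal := by
    intro u hut
    by_cases hu : u = 0
    · subst hu
      rw [hΦ0, norm_zero, Real.zero_rpow hp0.ne']
      simp
    · have hun : (0:ℝ) < ‖u‖ := norm_pos_iff.mpr hu
      have hmem : p * (Φ u).toReal / ‖u‖ ^ p ∈ RayleighSet Φ p := ⟨u, hu, hut, rfl⟩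
      have hbdd : BddBelow (RayleighSet Φ p) := by
        refine ⟨0, fun r hr => ?_⟩
        obtain ⟨v, hv, hvt, rfl⟩ := hr
        have h1 : (0:ℝ) ≤ (Φ v).toReal := by
          have := hnn v
          rcases eq_or_ne (Φ v) ⊥ with h | h
          · simp [h] at this
          · have : (0:ℝ) ≤ (Φ v).toReal := by
              have hco := EReal.coe_toReal hvt h
              have := hnn v
              rw [← hco] at this
              exact_mod_cast this
            exact this
        positivity
      have hle : lam ≤ p * (Φ u).toReal / ‖u‖ ^ p := hlam ▸ csInf_le hbdd hmem
      have hup : (0:ℝ) < ‖u‖ ^ p := Real.rpow_pos_of_pos hun p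
      rw [le_div_iff₀ hup] at hle
      rw [div_le_iff₀ hp0]
      nlinarith
  have hwb : Φ w ≠ ⊥ := fun h => by simpa [h] using hnn w
  constructor
  · -- minimizer → eigen
    intro heq
    obtain ⟨ξ, hξJ, hξw⟩ := jdual_exists' p hp w hw
    have hwt : Φ w ≠ ⊤ := by
      intro h
      rw [h] at heq
      rw [EReal.mul_top_of_pos (by exact_mod_cast hp0)] at heq
      exact (EReal.coe_ne_top _) heq.symm
    set a : ℝ := (Φ w).toReal with ha
    have hwa : Φ w = (a : EReal) := (EReal.coe_toReal hwt hwb).symm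
    have hpa : p * a = lam * ‖w‖ ^ p := by
      rw [hwa, ← EReal.coe_mul] at heq
      exact_mod_cast heq
    refine ⟨ξ, hξJ, fun u => ?_⟩
    rcases eq_or_ne (Φ u) ⊤ with hut | hut
    · rw [hut]; exact le_top
    · have hub : Φ u ≠ ⊥ := fun h => by simpa [h] using hnn u
      set b : ℝ := (Φ u).toReal with hb
      have hua : Φ u = (b : EReal) := (EReal.coe_toReal hut hub).symm
      rw [hwa, hua, ContinuousLinearMap.smul_apply, smul_eq_mul, ← EReal.coe_add,
        EReal.coe_le_coe_iff]
      have hJ := hξJ u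
      have h2 : lam * (‖w‖ ^ p / p) + lam * ξ (u - w) ≤ lam * (‖u‖ ^ p / p) := by
        nlinarith [hJ]
      have h3 : lam * ‖u‖ ^ p / p ≤ b := hlb u hut
      have h4 : a = lam * ‖w‖ ^ p / p := by field_simp; linarith [hpa]
      rw [h4]
      have h5 : lam * (‖u‖ ^ p / p) = lam * ‖u‖ ^ p / p := by ring
      have h6 : lam * (‖w‖ ^ p / p) = lam * ‖w‖ ^ p / p := by ring
      linarith [h2, h3]
  · -- eigen → minimizer
    rintro ⟨ξ, hξJ, hsub⟩
    -- Step A: ξ w = ‖w‖^p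
    have hξw : ξ w = ‖w‖ ^ p := by
      set g : ℝ → ℝ := fun t => t ^ p * (‖w‖ ^ p / p) - (t - 1) * ξ w with hg
      have hgmin : IsLocalMin g 1 := by
        have hmem : Ioi (0:ℝ) ∈ 𝓝 (1:ℝ) := Ioi_mem_nhds zero_lt_one
        filter_upwards [hmem] with t ht
        have hJ := hξJ (t • w)
        have h1 : ξ (t • w - w) = (t - 1) * ξ w := by
          have : t • w - w = (t - 1) • w := by
            rw [sub_smul, one_smul]
          rw [this, ξ.map_smul, smul_eq_mul]
        have h2 : ‖t • w‖ ^ p = t ^ p * ‖w‖ ^ p := by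
          rw [norm_smul, Real.norm_eq_abs, abs_of_pos ht, Real.mul_rpow (le_of_lt ht) (norm_nonneg w)]
        rw [h1, h2] at hJ
        have hg1 : g 1 = ‖w‖ ^ p / p := by simp [hg, Real.one_rpow]
        have hgt : g t = t ^ p * ‖w‖ ^ p / p - (t - 1) * ξ w := by simp [hg]; ring
        rw [hg1, hgt]
        linarith
      have hd : HasDerivAt g (p * (1:ℝ) ^ (p - 1) * (‖w‖ ^ p / p) - 1 * ξ w) 1 := by
        exact ((Real.hasDerivAt_rpow_const (Or.inl one_ne_zero)).mul_const _).sub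
          (((hasDerivAt_id 1).sub_const 1).mul_const _)
      have hzero := hgmin.hasDerivAt_eq_zero hd
      rw [Real.one_rpow, mul_one, one_mul] at hzero
      have : p * (‖w‖ ^ p / p) = ‖w‖ ^ p := by field_simp
      linarith [hzero, this]
    -- Step B: Φ w finite
    have hwt : Φ w ≠ ⊤ := by
      intro h
      have hs := hsub 0
      rw [h, hΦ0] at hs
      rw [EReal.top_add_of_ne_bot (EReal.coe_ne_bot _)] at hs
      simp at hs
    set a : ℝ := (Φ w).toReal with ha
    have hwa : Φ w = (a : EReal) := (EReal.coe_toReal hwt hwb).symm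
    -- Step C: local min for t ↦ t^p a − lam (t−1) ‖w‖^p
    have key : ∀ t : ℝ, 0 < t → a + lam * (t - 1) * ‖w‖ ^ p ≤ t ^ p * a := by
      intro t ht
      have hs := hsub (t • w)
      have h1 : (lam • ξ) (t • w - w) = lam * ((t - 1) * ‖w‖ ^ p) := by
        have h2 : t • w - w = (t - 1) • w := by rw [sub_smul, one_smul]
        rw [h2, ContinuousLinearMap.smul_apply, ξ.map_smul, smul_eq_mul, smul_eq_mul, hξw]
      have h3 : Φ (t • w) = ((t ^ p * a : ℝ) : EReal) := by
        rw [hhom t ht.le w, hwa, ← EReal.coe_mul]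
      rw [h1, h3, hwa, ← EReal.coe_add, EReal.coe_le_coe_iff] at hs
      nlinarith [hs]
    have hgmin : IsLocalMin (fun t : ℝ => t ^ p * a - lam * (t - 1) * ‖w‖ ^ p) 1 := by
      have hmem : Ioi (0:ℝ) ∈ 𝓝 (1:ℝ) := Ioi_mem_nhds zero_lt_one
      filter_upwards [hmem] with t ht
      have := key t ht
      simp only [Real.one_rpow, one_mul]
      linarith
    have hd : HasDerivAt (fun t : ℝ => t ^ p * a - lam * (t - 1) * ‖w‖ ^ p)
        (p * (1:ℝ) ^ (p - 1) * a - lam * 1 * ‖w‖ ^ p) 1 := by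
      refine ((Real.hasDerivAt_rpow_const (Or.inl one_ne_zero)).mul_const _).sub ?_
      have : HasDerivAt (fun t : ℝ => lam * (t - 1) * ‖w‖ ^ p) (lam * 1 * ‖w‖ ^ p) 1 := by
        have h5 : HasDerivAt (fun t : ℝ => t - 1) 1 (1:ℝ) := (hasDerivAt_id 1).sub_const 1
        simpa [mul_comm, mul_assoc, mul_left_comm] using (h5.const_mul lam).mul_const (‖w‖ ^ p)
      exact this
    have hzero := hgmin.hasDerivAt_eq_zero hd
    rw [Real.one_rpow, mul_one] at hzero
    rw [hwa, ← EReal.coe_mul, EReal.coe_eq_coe_iff]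
    linarith
end
end

section
/- If u ∈ Dom(Φ) \ {0} satisfies ∂Φ(u) ∩ λ J_p(u) ≠ ∅ for some λ ∈ ℝ, then λ = pΦ(u)/‖u‖^p ≥ λ_p. -/
open Filter Set MeasureTheory Topology
open scoped ENNReal NNReal

noncomputable section

variable {X : Type*} [NormedAddCommGroup X] [NormedSpace ℝ X] [CompleteSpace X]

lemma deriv_trick (p A C : ℝ) (hp : 1 < p)
    (h : ∀ t : ℝ, 0 < t → A * (t - 1) ≤ C * (t ^ p - 1)) : A = p * C := by
  set f : ℝ → ℝ := fun t => C * (t ^ p - 1) - A * (t - 1) with hf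
  have hf1 : f 1 = 0 := by simp [hf, Real.one_rpow]
  have hmin : IsLocalMin f 1 := by
    have hev : ∀ᶠ t in 𝓝 (1:ℝ), (0:ℝ) < t := eventually_gt_nhds one_pos
    filter_upwards [hev] with t ht
    have := h t ht
    rw [hf1]
    simp only [hf]
    linarith
  have hd : HasDerivAt f (C * (p * (1:ℝ) ^ (p - 1)) - A * 1) 1 := by
    have h1 : HasDerivAt (fun t : ℝ => t ^ p) (p * (1:ℝ) ^ (p - 1)) 1 :=
      Real.hasDerivAt_rpow_const (Or.inl one_ne_zero)
    exact ((h1.sub_const 1).const_mul C).sub (((hasDerivAt_id 1).sub_const 1).const_mul A)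
  have h0 := hmin.hasDerivAt_eq_zero hd
  rw [Real.one_rpow] at h0
  linarith

theorem eigenvalue_lower_bound (Φ : X → EReal) (p lam lamp : ℝ) (hp : 1 < p)
    (hnn : ∀ x : X, (0 : EReal) ≤ Φ x)
    (hconv : IsConvexE Φ) (hsc : IsStrictConvexOnDom Φ) (hhom : IsHomog Φ p)
    (hlam : lamp = sInf (RayleighSet Φ p))
    (u : X) (hu0 : u ≠ 0) (hufin : Φ u ≠ ⊤)
    (h : ∃ ξ : X →L[ℝ] ℝ, ξ ∈ Jdual p u ∧ lam • ξ ∈ ERealSubdiff Φ u) :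
    lam = p * (Φ u).toReal / ‖u‖ ^ p ∧ lamp ≤ lam := by
  obtain ⟨ξ, hξJ, hξS⟩ := h
  have hp0 : (0:ℝ) < p := lt_trans one_pos hp
  set φu := (Φ u).toReal with hφu
  have hΦbot : Φ u ≠ ⊥ := ((EReal.bot_lt_zero).trans_le (hnn u)).ne'
  have hΦeq : Φ u = (φu : EReal) := (EReal.coe_toReal hufin hΦbot).symm
  have hnorm : (0:ℝ) < ‖u‖ := norm_pos_iff.mpr hu0
  have hnp : (0:ℝ) < ‖u‖ ^ p := Real.rpow_pos_of_pos hnorm p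
  have hsub : ∀ t : ℝ, t • u - u = (t - 1) • u := by
    intro t; rw [sub_smul, one_smul]
  -- Fact 1 : ξ u = ‖u‖ ^ p
  have h1 : ∀ t : ℝ, 0 < t → (ξ u) * (t - 1) ≤ (‖u‖ ^ p / p) * (t ^ p - 1) := by
    intro t ht
    have hJ := hξJ (t • u)
    rw [hsub t, ξ.map_smul] at hJ
    have hnorm' : ‖t • u‖ ^ p = t ^ p * ‖u‖ ^ p := by
      rw [norm_smul, Real.norm_eq_abs, abs_of_pos ht, Real.mul_rpow ht.le (norm_nonneg u)]
    rw [hnorm'] at hJ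
    simp only [smul_eq_mul] at hJ
    have hdiv : (‖u‖ ^ p / p) * (t ^ p - 1) = t ^ p * ‖u‖ ^ p / p - ‖u‖ ^ p / p := by
      field_simp
    rw [hdiv]
    linarith
  have hxiu : ξ u = ‖u‖ ^ p := by
    have := deriv_trick p (ξ u) (‖u‖ ^ p / p) hp h1
    field_simp at this
    linarith
  -- Fact 2 : lam * ξ u = p * φu
  have h2 : ∀ t : ℝ, 0 < t → (lam * ξ u) * (t - 1) ≤ φu * (t ^ p - 1) := by
    intro t ht
    have hS := hξS (t • u)
    rw [hsub t, (lam • ξ).map_smul, hhom t ht.le u, hΦeq] at hS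
    have happ : ((t - 1) • (lam • ξ) u : ℝ) = (lam * ξ u) * (t - 1) := by
      simp only [smul_eq_mul, ContinuousLinearMap.smul_apply]; ring
    rw [happ] at hS
    have hS' : ((φu + (lam * ξ u) * (t - 1) : ℝ) : EReal) ≤ ((t ^ p * φu : ℝ) : EReal) := by
      rw [EReal.coe_add, EReal.coe_mul]; exact hS
    rw [EReal.coe_le_coe_iff] at hS'
    nlinarith [hS']
  have hlamxi : lam * ξ u = p * φu := deriv_trick p (lam * ξ u) φu hp h2
  rw [hxiu] at hlamxi
  have hmain : lam = p * φu / ‖u‖ ^ p := by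
    field_simp
    linarith
  refine ⟨hmain, ?_⟩
  have hmem : lam ∈ RayleighSet Φ p := ⟨u, hu0, hufin, hmain⟩
  have hbdd : BddBelow (RayleighSet Φ p) := by
    refine ⟨0, ?_⟩
    rintro r ⟨v, hv0, hvfin, rfl⟩
    have h1 : (0:ℝ) ≤ (Φ v).toReal := by simpa using EReal.toReal_le_toReal (hnn v) (by simp) hvfin
    have h2 : (0:ℝ) < ‖v‖ ^ p := Real.rpow_pos_of_pos (norm_pos_iff.mpr hv0) p
    positivity
  rw [hlam]
  exact csInf_le hbdd hmem
end
end

section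
/- Define α_w(u) := inf{α > 0 : αw ∈ P_w(u)}. Then α_w is positively homogeneous (α_w(su) = s α_w(u) for s > 0), lower semicontinuous on X, and continuous at each point of the form γw, γ ∈ ℝ, with α_w(γw) = γ⁺. -/
open Filter Set MeasureTheory Topology
open scoped ENNReal NNReal

noncomputable section

variable {X : Type*} [NormedAddCommGroup X] [NormedSpace ℝ X] [CompleteSpace X]

namespace AlphaRayAux

variable {X : Type*} [NormedAddCommGroup X] [NormedSpace ℝ X]

/-- Minimizer set of `β ↦ ‖u - β • w‖` over `β ≥ 0`. -/
def Mset (w u : X) : Set ℝ :=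
  {β | 0 ≤ β ∧ ∀ β' : ℝ, 0 ≤ β' → ‖u - β • w‖ ≤ ‖u - β' • w‖}

lemma Mset_nonempty (w u : X) (hw : w ≠ 0) : (Mset w u).Nonempty := by
  have hwpos : 0 < ‖w‖ := norm_pos_iff.mpr hw
  set R : ℝ := 2 * ‖u‖ / ‖w‖ + 1 with hR
  have hR0 : (0:ℝ) ≤ R := by positivity
  have hcont : Continuous fun β : ℝ => ‖u - β • w‖ := by fun_prop
  obtain ⟨β₀, hβ₀, hmin⟩ := (isCompact_Icc (a := (0:ℝ)) (b := R)).exists_isMinOn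
    ⟨0, by simp [hR0]⟩ hcont.continuousOn
  refine ⟨β₀, hβ₀.1, ?_⟩
  intro β' hβ'
  by_cases hle : β' ≤ R
  · exact hmin ⟨hβ', hle⟩
  · push_neg at hle
    have h1 : ‖u - β₀ • w‖ ≤ ‖u‖ := by simpa using hmin (Set.mem_Icc.mpr ⟨le_rfl, hR0⟩)
    have h2 : β' * ‖w‖ - ‖u‖ ≤ ‖u - β' • w‖ := by
      rw [norm_sub_rev]
      have := norm_sub_norm_le (β' • w) u
      rw [norm_smul, Real.norm_of_nonneg hβ'] at this
      linarith
    have hRw : R * ‖w‖ = 2 * ‖u‖ + ‖w‖ := by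
      rw [hR, add_mul, div_mul_cancel₀ _ hwpos.ne', one_mul]
    nlinarith [mul_lt_mul_of_pos_right hle hwpos, norm_nonneg u]

lemma Mset_bddBelow (w u : X) : BddBelow (Mset w u) := ⟨0, fun _ h => h.1⟩

lemma Mset_isClosed (w u : X) : IsClosed (Mset w u) := by
  have : Mset w u = (Ici 0) ∩ ⋂ β' ∈ Ici (0:ℝ), {β | ‖u - β • w‖ ≤ ‖u - β' • w‖} := by
    ext β
    simp only [Mset, Set.mem_setOf_eq, Set.mem_inter_iff, Set.mem_Ici, Set.mem_iInter]
  rw [this]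
  exact isClosed_Ici.inter (isClosed_biInter fun β' _ =>
    isClosed_le (by fun_prop) continuous_const)

lemma Mset_convex_aux {w u : X} {b ε : ℝ} (h0 : (0:ℝ) ∈ Mset w u) (hb : b ∈ Mset w u)
    (hε0 : 0 < ε) (hεb : ε ≤ b) : ε ∈ Mset w u := by
  have hb0 : 0 < b := lt_of_lt_of_le hε0 hεb
  set t : ℝ := ε / b with ht
  have ht0 : 0 ≤ t := by positivity
  have ht1 : t ≤ 1 := by rw [ht, div_le_one hb0]; exact hεb
  have hc : u - ε • w = (1 - t) • u + t • (u - b • w) := by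
    have : t • (b • w) = ε • w := by
      rw [smul_smul, ht, div_mul_cancel₀]
      exact ne_of_gt hb0
    rw [smul_sub, this]
    module
  have hval : ‖u - b • w‖ = ‖u - (0:ℝ) • w‖ := le_antisymm (hb.2 0 le_rfl) (h0.2 b hb.1)
  refine ⟨le_of_lt hε0, fun β' hβ' => ?_⟩
  have key : ‖u - ε • w‖ ≤ ‖u - (0:ℝ) • w‖ := by
    calc ‖u - ε • w‖ = ‖(1 - t) • u + t • (u - b • w)‖ := by rw [hc]
    _ ≤ ‖(1 - t) • u‖ + ‖t • (u - b • w)‖ := norm_add_le _ _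
    _ = (1 - t) * ‖u‖ + t * ‖u - b • w‖ := by
        rw [norm_smul, norm_smul, Real.norm_of_nonneg ht0, Real.norm_of_nonneg (by linarith)]
    _ = ‖u - (0:ℝ) • w‖ := by
        rw [hval]; simp only [zero_smul, sub_zero]; ring
  exact key.trans (h0.2 β' hβ')

lemma mem_ProjRay_iff {w u : X} (hw : w ≠ 0) {α : ℝ} (hα : 0 ≤ α) :
    α • w ∈ ProjRay w u ↔ α ∈ Mset w u := by
  constructor
  · rintro ⟨α', hα', heq, hmin⟩
    have : α = α' := by
      have h := sub_eq_zero.mpr heq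
      rw [← sub_smul] at h
      rcases smul_eq_zero.mp h with h | h
      · linarith [sub_eq_zero.mp h]
      · exact absurd h hw
    subst this
    exact ⟨hα, hmin⟩
  · rintro ⟨h1, h2⟩
    exact ⟨α, h1, rfl, h2⟩

/-- Key identity: `alphaRay w u = sInf (Mset w u)`. -/
lemma alphaRay_eq_sInf_Mset (w u : X) (hw : w ≠ 0) : alphaRay w u = sInf (Mset w u) := by
  have hne := Mset_nonempty w u hw
  have hbdd := Mset_bddBelow w u
  have hmem : sInf (Mset w u) ∈ Mset w u := (Mset_isClosed w u).csInf_mem hne hbdd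
  set a := sInf (Mset w u) with ha
  have ha0 : 0 ≤ a := hmem.1
  have hAset : {α : ℝ | 0 < α ∧ α • w ∈ ProjRay w u} = Mset w u ∩ Ioi 0 := by
    ext α
    simp only [Set.mem_setOf_eq, Set.mem_inter_iff, Set.mem_Ioi]
    constructor
    · rintro ⟨hα, hp⟩; exact ⟨(mem_ProjRay_iff hw hα.le).mp hp, hα⟩
    · rintro ⟨hm, hα⟩; exact ⟨hα, (mem_ProjRay_iff hw hα.le).mpr hm⟩
  rw [alphaRay, hAset]
  rcases lt_or_eq_of_le ha0 with hapos | hzero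
  · have : Mset w u ∩ Ioi 0 = Mset w u := by
      apply Set.inter_eq_self_of_subset_left
      intro β hβ
      exact lt_of_lt_of_le hapos (csInf_le hbdd hβ)
    rw [this]
  · -- a = 0
    have h0mem : (0:ℝ) ∈ Mset w u := by rwa [← hzero] at hmem
    rw [← hzero]
    have hbdd2 : BddBelow (Mset w u ∩ Ioi 0) := ⟨0, fun β hβ => hβ.1.1⟩
    rcases Set.eq_empty_or_nonempty (Mset w u ∩ Ioi 0) with hemp | ⟨b, hbM, hb0⟩
    · rw [hemp, Real.sInf_empty]
    · apply le_antisymm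
      · have : ∀ ε > (0:ℝ), sInf (Mset w u ∩ Ioi 0) ≤ 0 + ε := by
          intro ε hε
          have hm0 : 0 < min ε b := lt_min hε hb0
          have hmem2 : min ε b ∈ Mset w u ∩ Ioi 0 :=
            ⟨Mset_convex_aux h0mem hbM hm0 (min_le_right _ _), hm0⟩
          calc sInf (Mset w u ∩ Ioi 0) ≤ min ε b := csInf_le hbdd2 hmem2
          _ ≤ ε := min_le_left _ _
          _ = 0 + ε := by ring
        exact le_of_forall_pos_le_add this
      · refine le_csInf ⟨b, hbM, hb0⟩ ?_
        rintro β ⟨_, hβ⟩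
        exact hβ.le



lemma norm_smul_ray (w u : X) {s : ℝ} (hs : 0 ≤ s) (α : ℝ) :
    ‖s • u - (s * α) • w‖ = s * ‖u - α • w‖ := by
  rw [mul_smul, ← smul_sub, norm_smul, Real.norm_of_nonneg hs]

lemma Mset_smul_mem (w u : X) {s : ℝ} (hs : 0 < s) (α : ℝ) :
    α ∈ Mset w u ↔ s * α ∈ Mset w (s • u) := by
  constructor
  · rintro ⟨h0, h⟩
    refine ⟨by positivity, fun β' hβ' => ?_⟩
    have e1 := norm_smul_ray w u hs.le α
    have e2 := norm_smul_ray w u hs.le (β' / s)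
    rw [mul_div_cancel₀ _ (ne_of_gt hs)] at e2
    rw [e1, e2]
    exact mul_le_mul_of_nonneg_left (h _ (by positivity)) hs.le
  · rintro ⟨h0, h⟩
    have hα : 0 ≤ α := nonneg_of_mul_nonneg_right h0 hs
    refine ⟨hα, fun β' hβ' => ?_⟩
    have h2 := h (s * β') (by positivity)
    rw [norm_smul_ray w u hs.le α, norm_smul_ray w u hs.le β'] at h2
    exact le_of_mul_le_mul_left h2 hs

open Pointwise in
lemma Mset_smul (w u : X) {s : ℝ} (hs : 0 < s) : Mset w (s • u) = s • (Mset w u) := by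
  ext β
  rw [Set.mem_smul_set]
  constructor
  · intro hβ
    refine ⟨β / s, ?_, by rw [smul_eq_mul, mul_div_cancel₀ _ (ne_of_gt hs)]⟩
    rw [Mset_smul_mem w u hs (β / s), mul_div_cancel₀ _ (ne_of_gt hs)]
    exact hβ
  · rintro ⟨y, hy, rfl⟩
    exact (Mset_smul_mem w u hs y).mp hy

lemma Mset_smul_self (w : X) (hw : w ≠ 0) (γ : ℝ) : Mset w (γ • w) = {max γ 0} := by
  have hwpos : 0 < ‖w‖ := norm_pos_iff.mpr hw
  have hnorm : ∀ β : ℝ, ‖γ • w - β • w‖ = |γ - β| * ‖w‖ := by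
    intro β; rw [← sub_smul, norm_smul, Real.norm_eq_abs]
  ext β
  simp only [Set.mem_singleton_iff, Mset, Set.mem_setOf_eq]
  constructor
  · rintro ⟨h0, h⟩
    have h1 := h (max γ 0) (le_max_right _ _)
    rw [hnorm, hnorm] at h1
    have h2 : |γ - β| ≤ |γ - max γ 0| := le_of_mul_le_mul_right h1 hwpos
    rcases le_or_gt 0 γ with hγ | hγ
    · rw [max_eq_left hγ] at h2 ⊢
      have h3 : |γ - β| ≤ 0 := by simpa using h2
      have h4 := abs_nonpos_iff.mp h3
      linarith
    · rw [max_eq_right hγ.le] at h2 ⊢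
      rw [abs_of_nonpos (by linarith : γ - β ≤ 0), abs_of_neg (by linarith : γ - 0 < 0)] at h2
      linarith
  · rintro rfl
    refine ⟨le_max_right _ _, fun β' hβ' => ?_⟩
    rw [hnorm, hnorm]
    apply mul_le_mul_of_nonneg_right _ hwpos.le
    rcases le_or_gt 0 γ with hγ | hγ
    · rw [max_eq_left hγ]
      simp [abs_nonneg]
    · rw [max_eq_right hγ.le]
      rw [abs_of_neg (by linarith : γ - 0 < 0), abs_of_nonpos (by linarith : γ - β' ≤ 0)]
      linarith

lemma lsc (w : X) (hw : w ≠ 0) : LowerSemicontinuous fun u : X => sInf (Mset w u) := by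
  intro u y hy
  rcases lt_or_ge y 0 with hy0 | hy0
  · filter_upwards with u'
    have hmem : sInf (Mset w u') ∈ Mset w u' :=
      (Mset_isClosed w u').csInf_mem (Mset_nonempty w u' hw) (Mset_bddBelow w u')
    exact lt_of_lt_of_le hy0 hmem.1
  · have hcont : Continuous fun β : ℝ => ‖u - β • w‖ := by fun_prop
    obtain ⟨β₀, hβ₀, hmin⟩ := (isCompact_Icc (a := (0:ℝ)) (b := y)).exists_isMinOn
      ⟨0, by simp [hy0]⟩ hcont.continuousOn
    have haM : sInf (Mset w u) ∈ Mset w u :=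
      (Mset_isClosed w u).csInf_mem (Mset_nonempty w u hw) (Mset_bddBelow w u)
    set a := sInf (Mset w u) with ha
    set c := ‖u - a • w‖ with hc
    have hβ₀notM : β₀ ∉ Mset w u := by
      intro hmem
      have := csInf_le (Mset_bddBelow w u) hmem
      have hβ₀y := hβ₀.2
      rw [← ha] at this
      linarith
    have hgap : c < ‖u - β₀ • w‖ := by
      by_contra hle
      push_neg at hle
      exact hβ₀notM ⟨hβ₀.1, fun β' hβ' => hle.trans (haM.2 β' hβ')⟩
    set ε := (‖u - β₀ • w‖ - c) / 3 with hε
    have hεpos : 0 < ε := by rw [hε]; linarith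
    rw [Metric.eventually_nhds_iff]
    refine ⟨ε, hεpos, fun u' hu' => ?_⟩
    rw [dist_eq_norm] at hu'
    have haM' : sInf (Mset w u') ∈ Mset w u' :=
      (Mset_isClosed w u').csInf_mem (Mset_nonempty w u' hw) (Mset_bddBelow w u')
    set a' := sInf (Mset w u') with ha'
    by_contra hcon
    push_neg at hcon
    have ha'Icc : a' ∈ Icc 0 y := ⟨haM'.1, hcon⟩
    have h1 : ‖u - β₀ • w‖ ≤ ‖u - a' • w‖ := hmin ha'Icc
    have key : ∀ β : ℝ, |‖u' - β • w‖ - ‖u - β • w‖| ≤ ‖u' - u‖ := by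
      intro β
      have h := abs_norm_sub_norm_le (u' - β • w) (u - β • w)
      simpa [sub_sub_sub_cancel_right] using h
    have h4 : ‖u' - a' • w‖ ≤ ‖u' - a • w‖ := haM'.2 a haM.1
    have h5 := abs_le.mp (key a')
    have h6 := abs_le.mp (key a)
    have := h5.1
    have := h6.2
    linarith

lemma cont_at (w : X) (hw : w ≠ 0) (γ : ℝ) :
    ContinuousAt (fun u : X => sInf (Mset w u)) (γ • w) := by
  have hwpos : 0 < ‖w‖ := norm_pos_iff.mpr hw
  rw [Metric.continuousAt_iff]
  intro ε hε
  refine ⟨ε * ‖w‖ / 3, by positivity, fun u' hu' => ?_⟩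
  rw [dist_eq_norm] at hu'
  set m := max γ 0 with hm
  have hm0 : 0 ≤ m := le_max_right _ _
  have hmγ : |γ - m| = m - γ := by
    rcases le_or_gt 0 γ with h | h
    · rw [hm, max_eq_left h]; simp
    · rw [hm, max_eq_right h.le, abs_of_neg (by linarith : γ - 0 < 0)]; ring
  have hnorm : ∀ β : ℝ, ‖γ • w - β • w‖ = |γ - β| * ‖w‖ := by
    intro β; rw [← sub_smul, norm_smul, Real.norm_eq_abs]
  have hval : sInf (Mset w (γ • w)) = m := by
    rw [Mset_smul_self w hw γ]; exact csInf_singleton _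
  have haM' : sInf (Mset w u') ∈ Mset w u' :=
    (Mset_isClosed w u' ).csInf_mem (Mset_nonempty w u' hw) (Mset_bddBelow w u')
  set a' := sInf (Mset w u') with ha'
  rw [Real.dist_eq, hval]
  by_contra hcon
  push_neg at hcon
  have hclaim : (m - γ) + ε ≤ |γ - a'| := by
    rcases le_abs.mp hcon with h | h
    · -- a' ≥ m + ε
      have : γ ≤ m := le_max_left _ _
      rw [abs_of_nonpos (by linarith : γ - a' ≤ 0)]
      linarith
    · -- a' ≤ m - ε
      have hmε : ε ≤ m := by linarith [haM'.1]
      have hγpos : 0 < γ := by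
        by_contra hγ
        push_neg at hγ
        rw [hm, max_eq_right hγ] at hmε
        linarith
      have hmγ' : m = γ := by rw [hm, max_eq_left hγpos.le]
      rw [abs_of_nonneg (by linarith : 0 ≤ γ - a')]
      linarith
  have h1 : ‖u' - a' • w‖ ≤ ‖u' - m • w‖ := haM'.2 m hm0
  have h2 : ‖u' - m • w‖ ≤ ‖u' - γ • w‖ + ‖γ • w - m • w‖ := by
    have := dist_triangle u' (γ • w) (m • w)
    simpa [dist_eq_norm] using this
  have h3 : ‖γ • w - a' • w‖ ≤ ‖u' - γ • w‖ + ‖u' - a' • w‖ := by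
    have := dist_triangle (γ • w) u' (a' • w)
    simpa [dist_eq_norm, norm_sub_rev (γ • w) u'] using this
  have h4 : ((m - γ) + ε) * ‖w‖ ≤ ‖γ • w - a' • w‖ := by
    rw [hnorm]
    exact mul_le_mul_of_nonneg_right hclaim hwpos.le
  have h5 : ‖γ • w - m • w‖ = (m - γ) * ‖w‖ := by rw [hnorm, hmγ]
  have hpos : 0 < ε * ‖w‖ := by positivity
  nlinarith

end AlphaRayAux

theorem alphaRay_properties (w : X) (hw : w ≠ 0) :
    (∀ s : ℝ, 0 < s → ∀ u : X, alphaRay w (s • u) = s * alphaRay w u) ∧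
      LowerSemicontinuous (alphaRay w) ∧
      ∀ γ : ℝ, ContinuousAt (alphaRay w) (γ • w) ∧ alphaRay w (γ • w) = max γ 0 := by 
  have hkey : ∀ u : X, alphaRay w u = sInf (AlphaRayAux.Mset w u) := fun u =>
    AlphaRayAux.alphaRay_eq_sInf_Mset w u hw
  have hfun : alphaRay w = fun u => sInf (AlphaRayAux.Mset w u) := funext hkey
  refine ⟨?_, ?_, ?_⟩
  · intro s hs u
    rw [hkey, hkey, AlphaRayAux.Mset_smul w u hs, Real.sInf_smul_of_nonneg hs.le, smul_eq_mul]
  · rw [hfun]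
    exact AlphaRayAux.lsc w hw
  · intro γ
    constructor
    · rw [hfun]
      exact AlphaRayAux.cont_at w hw γ
    · rw [hkey, AlphaRayAux.Mset_smul_self w hw γ, csInf_singleton]
end
end

section
/- If (u_k) satisfies the inverse iteration scheme ∂Φ(u_k) ∩ J_p(u_{k−1}) ≠ ∅ for all k ∈ ℕ, then ‖u_k‖ ≤ μ_p^{−1} ‖u_{k−1}‖ and Φ(u_k) ≤ μ_p^{−p} Φ(u_{k−1}) for all k, where μ_p = λ_p^{1/(p−1)}. In particular the sequences (‖μ_p^k u_k‖) and (Φ(μ_p^k u_k)) are nonincreasing. -/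
open Filter Set MeasureTheory Topology
open scoped ENNReal NNReal

noncomputable section

variable {X : Type*} [NormedAddCommGroup X] [NormedSpace ℝ X] [CompleteSpace X]

lemma aux_deriv (p c s : ℝ) (hp : 1 < p) (hc : 0 ≤ c)
    (h : ∀ t : ℝ, 0 ≤ t → c + (t - 1) * s ≤ t ^ p * c) : s = p * c := by
  have hd : HasDerivAt (fun t : ℝ => t ^ p * c - c - (t - 1) * s) (p * c - s) 1 := by
    have h1 : HasDerivAt (fun t : ℝ => t ^ p) (p * (1:ℝ) ^ (p - 1)) 1 :=
      Real.hasDerivAt_rpow_const (Or.inl one_ne_zero)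
    have h2 := ((h1.mul_const c).sub_const c).sub
      (((hasDerivAt_id (1:ℝ)).sub_const 1).mul_const s)
    have h3 : HasDerivAt (fun t : ℝ => t ^ p * c - c - (t - 1) * s)
        (p * (1:ℝ) ^ (p - 1) * c - 1 * s) 1 := h2
    rw [Real.one_rpow, mul_one, one_mul] at h3
    exact h3
  have hmin : IsLocalMin (fun t : ℝ => t ^ p * c - c - (t - 1) * s) 1 := by
    filter_upwards [eventually_gt_nhds zero_lt_one] with t ht
    have := h t ht.le
    simp only [Real.one_rpow]
    linarith
  have h0 := hmin.hasDerivAt_eq_zero hd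
  linarith

lemma Jdual_self {p : ℝ} (hp : 1 < p) {u : X} {ξ : X →L[ℝ] ℝ} (hξ : ξ ∈ Jdual p u) :
    ξ u = ‖u‖ ^ p := by
  have hp0 : (0:ℝ) < p := lt_trans one_pos hp
  have h : ∀ t : ℝ, 0 ≤ t → ‖u‖ ^ p / p + (t - 1) * ξ u ≤ t ^ p * (‖u‖ ^ p / p) := by
    intro t ht
    have h := hξ (t • u)
    rw [norm_smul, Real.norm_eq_abs, abs_of_nonneg ht,
      Real.mul_rpow ht (norm_nonneg u)] at h
    have he : ξ (t • u - u) = (t - 1) * ξ u := by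
      rw [map_sub, ξ.map_smul, smul_eq_mul]; ring
    rw [he] at h
    calc ‖u‖ ^ p / p + (t - 1) * ξ u ≤ t ^ p * ‖u‖ ^ p / p := h
      _ = t ^ p * (‖u‖ ^ p / p) := by ring
  have hres := aux_deriv p (‖u‖ ^ p / p) (ξ u) hp
    (div_nonneg (Real.rpow_nonneg (norm_nonneg u) p) hp0.le) h
  rw [hres, mul_comm, div_mul_cancel₀ _ hp0.ne']

lemma Jdual_bound {p : ℝ} (hp : 1 < p) {u : X} {ξ : X →L[ℝ] ℝ} (hξ : ξ ∈ Jdual p u) (z : X) :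
    ξ z ≤ ‖u‖ ^ (p - 1) * ‖z‖ := by
  have hp0 : (0:ℝ) < p := lt_trans one_pos hp
  have hp1 : (0:ℝ) < p - 1 := by linarith
  have hself := Jdual_self hp hξ
  have key : ∀ s : ℝ, 0 < s → s * ξ z ≤ s ^ p * ‖z‖ ^ p / p + (1 - 1/p) * ‖u‖ ^ p := by
    intro s hs
    have h := hξ (s • z)
    rw [norm_smul, Real.norm_eq_abs, abs_of_nonneg hs.le,
      Real.mul_rpow hs.le (norm_nonneg z)] at h
    have he : ξ (s • z - u) = s * ξ z - ξ u := by rw [map_sub, ξ.map_smul, smul_eq_mul]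
    rw [he, hself] at h
    have hid : (1 - 1/p) * ‖u‖ ^ p = ‖u‖ ^ p - ‖u‖ ^ p / p := by field_simp
    linarith
  rcases eq_or_lt_of_le (norm_nonneg z) with hz | hz
  · have hz0 : z = 0 := by rwa [eq_comm, norm_eq_zero] at hz
    simp [hz0]
  rcases eq_or_lt_of_le (norm_nonneg u) with hu | hu
  · -- u has norm 0
    have hb : ∀ s : ℝ, 0 < s → ξ z ≤ s ^ (p - 1) * (‖z‖ ^ p / p) := by
      intro s hs
      have hk := key s hs
      rw [← hu, Real.zero_rpow hp0.ne'] at hk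
      have hsp : s ^ p = s ^ (p - 1) * s := by
        rw [← Real.rpow_add_one hs.ne' (p - 1)]; norm_num
      rw [hsp] at hk
      have : s * ξ z ≤ s * (s ^ (p - 1) * (‖z‖ ^ p / p)) := by
        calc s * ξ z ≤ s ^ (p-1) * s * ‖z‖ ^ p / p + (1 - 1/p) * 0 := hk
          _ = s * (s ^ (p - 1) * (‖z‖ ^ p / p)) := by ring
      exact le_of_mul_le_mul_left this hs
    have htend : Tendsto (fun s : ℝ => s ^ (p - 1) * (‖z‖ ^ p / p)) (𝓝[>] 0) (𝓝 0) := by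
      have h1 : Tendsto (fun s : ℝ => s ^ (p - 1)) (𝓝 (0:ℝ)) (𝓝 ((0:ℝ) ^ (p - 1))) :=
        (Real.continuousAt_rpow_const 0 (p - 1) (Or.inr hp1.le))
      rw [Real.zero_rpow hp1.ne'] at h1
      have h2 : Tendsto (fun s : ℝ => s ^ (p - 1)) (𝓝[>] (0:ℝ)) (𝓝 0) :=
        h1.mono_left nhdsWithin_le_nhds
      simpa using h2.mul_const (‖z‖ ^ p / p)
    have hle : ξ z ≤ 0 :=
      ge_of_tendsto htend (eventually_mem_nhdsWithin.mono fun s hs => hb s hs)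
    calc ξ z ≤ 0 := hle
      _ = ‖u‖ ^ (p - 1) * ‖z‖ := by rw [← hu, Real.zero_rpow hp1.ne', zero_mul]
  · -- both positive
    have hs : 0 < ‖u‖ / ‖z‖ := div_pos hu hz
    have hk := key (‖u‖ / ‖z‖) hs
    have hcalc : (‖u‖ / ‖z‖) ^ p * ‖z‖ ^ p = ‖u‖ ^ p := by
      rw [← Real.mul_rpow (div_nonneg hu.le hz.le) (norm_nonneg z),
        div_mul_cancel₀ _ hz.ne']
    rw [hcalc] at hk
    have hid : ‖u‖ ^ p / p + (1 - 1/p) * ‖u‖ ^ p = ‖u‖ ^ p := by field_simp; ring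
    have h2 : (‖u‖ / ‖z‖) * ξ z ≤ ‖u‖ ^ p := by linarith
    have h3 : ξ z ≤ ‖u‖ ^ p * ‖z‖ / ‖u‖ := by
      rw [le_div_iff₀ hu]
      calc ξ z * ‖u‖ = ((‖u‖ / ‖z‖) * ξ z) * ‖z‖ := by field_simp
        _ ≤ ‖u‖ ^ p * ‖z‖ := mul_le_mul_of_nonneg_right h2 hz.le
    have h4 : ‖u‖ ^ p * ‖z‖ / ‖u‖ = ‖u‖ ^ (p - 1) * ‖z‖ := by
      rw [Real.rpow_sub hu, Real.rpow_one]; ring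
    linarith

theorem inverse_iteration_monotonicity (Φ : X → EReal) (p lam μ : ℝ) (hp : 1 < p)
    (hnn : ∀ x : X, (0 : EReal) ≤ Φ x)
    (hconv : IsConvexE Φ) (hhom : IsHomog Φ p)
    (hlam : lam = sInf (RayleighSet Φ p)) (hpos : 0 < lam)
    (hμ : μ = lam ^ (1 / (p - 1)))
    (u : ℕ → X)
    (hit : ∀ k : ℕ, ∃ ξ : X →L[ℝ] ℝ, ξ ∈ ERealSubdiff Φ (u (k + 1)) ∧ ξ ∈ Jdual p (u k)) :
    (∀ k : ℕ, ‖u (k + 1)‖ ≤ μ⁻¹ * ‖u k‖) ∧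
      (∀ k : ℕ, Φ (u (k + 1)) ≤ (((μ ^ p)⁻¹ : ℝ) : EReal) * Φ (u k)) ∧
      Antitone (fun k : ℕ => ‖(μ ^ k : ℝ) • u k‖) ∧
      Antitone (fun k : ℕ => Φ ((μ ^ k : ℝ) • u k)) := by
  have hp0 : (0:ℝ) < p := lt_trans one_pos hp
  have hp1 : (0:ℝ) < p - 1 := by linarith
  have hμpos : 0 < μ := hμ ▸ Real.rpow_pos_of_pos hpos _
  have hΦ0 : Φ 0 = 0 := by
    have h := hhom 0 le_rfl 0
    rw [zero_smul, Real.zero_rpow hp0.ne'] at h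
    simpa using h
  have hbot : ∀ x : X, Φ x ≠ ⊥ := fun x h => by simpa [h] using hnn x
  have hcoe : ∀ x : X, Φ x ≠ ⊤ → Φ x = ((Φ x).toReal : EReal) :=
    fun x hx => (EReal.coe_toReal hx (hbot x)).symm
  have hFnn : ∀ x : X, 0 ≤ (Φ x).toReal := by
    intro x
    rcases eq_or_ne (Φ x) ⊤ with hx | hx
    · simp [hx]
    · have := hnn x
      rw [hcoe x hx] at this
      exact_mod_cast this
  have hray : ∀ x : X, Φ x ≠ ⊤ → lam * ‖x‖ ^ p ≤ p * (Φ x).toReal := by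
    intro x hx
    rcases eq_or_ne x 0 with rfl | hx0
    · simp [hΦ0, Real.zero_rpow hp0.ne']
    · have hmem : p * (Φ x).toReal / ‖x‖ ^ p ∈ RayleighSet Φ p := ⟨x, hx0, hx, rfl⟩
      have hbdd : BddBelow (RayleighSet Φ p) := by
        refine ⟨0, fun r hr => ?_⟩
        obtain ⟨y, hy0, hyT, rfl⟩ := hr
        exact div_nonneg (mul_nonneg hp0.le (hFnn y)) (Real.rpow_nonneg (norm_nonneg y) p)
      have hle : lam ≤ p * (Φ x).toReal / ‖x‖ ^ p := hlam ▸ csInf_le hbdd hmem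
      have hxp : 0 < ‖x‖ ^ p := Real.rpow_pos_of_pos (norm_pos_iff.mpr hx0) p
      calc lam * ‖x‖ ^ p ≤ (p * (Φ x).toReal / ‖x‖ ^ p) * ‖x‖ ^ p :=
            mul_le_mul_of_nonneg_right hle hxp.le
        _ = p * (Φ x).toReal := by field_simp
  have step : ∀ k : ℕ, Φ (u (k + 1)) ≠ ⊤ ∧ ‖u (k + 1)‖ ≤ μ⁻¹ * ‖u k‖ ∧
      p * (Φ (u (k + 1))).toReal ≤ ‖u k‖ ^ (p - 1) * ‖u (k + 1)‖ := by
    intro k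
    obtain ⟨ξ, hsub, hJ⟩ := hit k
    have hfin : Φ (u (k + 1)) ≠ ⊤ := by
      intro hT
      have h0 := hsub 0
      rw [hT, hΦ0, EReal.top_add_coe] at h0
      exact absurd h0 (by simp)
    have hc1 : Φ (u (k + 1)) = (((Φ (u (k + 1))).toReal : ℝ) : EReal) := hcoe _ hfin
    have hsubt : ∀ t : ℝ, 0 ≤ t →
        (Φ (u (k + 1))).toReal + (t - 1) * ξ (u (k + 1)) ≤ t ^ p * (Φ (u (k + 1))).toReal := by
      intro t ht
      have h := hsub (t • u (k + 1))
      rw [hhom t ht (u (k + 1))] at h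
      rw [hc1] at h
      have he : ξ (t • u (k + 1) - u (k + 1)) = (t - 1) * ξ (u (k + 1)) := by
        rw [map_sub, ξ.map_smul, smul_eq_mul]; ring
      rw [he] at h
      exact_mod_cast h
    have hξu1 : ξ (u (k + 1)) = p * (Φ (u (k + 1))).toReal :=
      aux_deriv p _ _ hp (hFnn _) hsubt
    have hJbd : ξ (u (k + 1)) ≤ ‖u k‖ ^ (p - 1) * ‖u (k + 1)‖ := Jdual_bound hp hJ _
    have h1 : p * (Φ (u (k + 1))).toReal ≤ ‖u k‖ ^ (p - 1) * ‖u (k + 1)‖ := hξu1 ▸ hJbd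
    have h2 : lam * ‖u (k + 1)‖ ^ p ≤ p * (Φ (u (k + 1))).toReal := hray _ hfin
    refine ⟨hfin, ?_, h1⟩
    rcases eq_or_lt_of_le (norm_nonneg (u (k + 1))) with hb | hb
    · rw [← hb]
      exact mul_nonneg (inv_nonneg.mpr hμpos.le) (norm_nonneg _)
    · have hbp : ‖u (k + 1)‖ ^ (p - 1) * ‖u (k + 1)‖ = ‖u (k + 1)‖ ^ p := by
        rw [← Real.rpow_add_one hb.ne' (p - 1)]; norm_num
      have key : lam * ‖u (k + 1)‖ ^ (p - 1) ≤ ‖u k‖ ^ (p - 1) := by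
        refine le_of_mul_le_mul_right ?_ hb
        calc lam * ‖u (k + 1)‖ ^ (p - 1) * ‖u (k + 1)‖ = lam * ‖u (k + 1)‖ ^ p := by
              rw [← hbp]; ring
          _ ≤ ‖u k‖ ^ (p - 1) * ‖u (k + 1)‖ := h2.trans h1
      have hb2 : ‖u (k + 1)‖ ^ (p - 1) ≤ ‖u k‖ ^ (p - 1) / lam := by
        rw [le_div_iff₀ hpos]; linarith
      have h3 := Real.rpow_le_rpow (Real.rpow_nonneg (norm_nonneg _) _) hb2
        (le_of_lt (by positivity : (0:ℝ) < 1 / (p - 1)))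
      have e1 : (‖u (k + 1)‖ ^ (p - 1)) ^ (1 / (p - 1)) = ‖u (k + 1)‖ := by
        rw [← Real.rpow_mul (norm_nonneg _), mul_one_div, div_self hp1.ne', Real.rpow_one]
      have e2 : (‖u k‖ ^ (p - 1) / lam) ^ (1 / (p - 1)) = μ⁻¹ * ‖u k‖ := by
        rw [Real.div_rpow (Real.rpow_nonneg (norm_nonneg _) _) hpos.le,
          ← Real.rpow_mul (norm_nonneg _), mul_one_div, div_self hp1.ne',
          Real.rpow_one, hμ, div_eq_mul_inv, mul_comm]
      rw [e1, e2] at h3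
      exact h3
  have H1 : ∀ k : ℕ, ‖u (k + 1)‖ ≤ μ⁻¹ * ‖u k‖ := fun k => (step k).2.1
  have HF : ∀ k : ℕ, Φ (u (k + 1)) ≠ ⊤ := fun k => (step k).1
  have hμp : μ ^ p = μ * lam := by
    have he : (1 / (p - 1)) * p = 1 / (p - 1) + 1 := by field_simp; ring
    rw [hμ, ← Real.rpow_mul hpos.le, he, Real.rpow_add hpos, Real.rpow_one]
  have H2r : ∀ k : ℕ, Φ (u k) ≠ ⊤ →
      (Φ (u (k + 1))).toReal ≤ (μ ^ p)⁻¹ * (Φ (u k)).toReal := by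
    intro k hk
    have h1 := (step k).2.2
    have h2 := (step k).2.1
    have h3 := hray (u k) hk
    rcases eq_or_lt_of_le (norm_nonneg (u k)) with ha | ha
    · have hb0 : ‖u (k + 1)‖ = 0 := by
        refine le_antisymm ?_ (norm_nonneg _)
        calc ‖u (k + 1)‖ ≤ μ⁻¹ * ‖u k‖ := h2
          _ = 0 := by rw [← ha, mul_zero]
      have hF0 : p * (Φ (u (k + 1))).toReal ≤ 0 := by
        rw [hb0, mul_zero] at h1; exact h1
      have hF0' : (Φ (u (k + 1))).toReal ≤ 0 := by nlinarith [hFnn (u (k + 1))]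
      have : (0:ℝ) ≤ (μ ^ p)⁻¹ * (Φ (u k)).toReal :=
        mul_nonneg (inv_nonneg.mpr (Real.rpow_nonneg hμpos.le p)) (hFnn (u k))
      linarith
    · have hap : ‖u k‖ ^ (p - 1) * ‖u (k + 1)‖ ≤ μ⁻¹ * ‖u k‖ ^ p := by
        calc ‖u k‖ ^ (p - 1) * ‖u (k + 1)‖ ≤ ‖u k‖ ^ (p - 1) * (μ⁻¹ * ‖u k‖) :=
              mul_le_mul_of_nonneg_left h2 (Real.rpow_nonneg (norm_nonneg _) _)
          _ = μ⁻¹ * (‖u k‖ ^ (p - 1) * ‖u k‖) := by ring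
          _ = μ⁻¹ * ‖u k‖ ^ p := by rw [← Real.rpow_add_one ha.ne' (p - 1)]; norm_num
      have k1 : p * (Φ (u (k + 1))).toReal ≤ μ⁻¹ * ‖u k‖ ^ p := h1.trans hap
      have k2 : lam * (p * (Φ (u (k + 1))).toReal) ≤ lam * (μ⁻¹ * ‖u k‖ ^ p) :=
        mul_le_mul_of_nonneg_left k1 hpos.le
      have k3 : lam * (μ⁻¹ * ‖u k‖ ^ p) = μ⁻¹ * (lam * ‖u k‖ ^ p) := by ring
      have k4 : μ⁻¹ * (lam * ‖u k‖ ^ p) ≤ μ⁻¹ * (p * (Φ (u k)).toReal) :=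
        mul_le_mul_of_nonneg_left h3 (inv_nonneg.mpr hμpos.le)
      have hfinal : lam * (p * (Φ (u (k + 1))).toReal) ≤ μ⁻¹ * (p * (Φ (u k)).toReal) :=
        (k3 ▸ k2).trans k4
      rw [hμp, mul_inv]
      calc (Φ (u (k + 1))).toReal
          = (lam * p)⁻¹ * (lam * (p * (Φ (u (k + 1))).toReal)) := by
            field_simp
        _ ≤ (lam * p)⁻¹ * (μ⁻¹ * (p * (Φ (u k)).toReal)) :=
            mul_le_mul_of_nonneg_left hfinal
              (inv_nonneg.mpr (mul_nonneg hpos.le hp0.le))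
        _ = μ⁻¹ * lam⁻¹ * (Φ (u k)).toReal := by
            field_simp
  have H2 : ∀ k : ℕ, Φ (u (k + 1)) ≤ (((μ ^ p)⁻¹ : ℝ) : EReal) * Φ (u k) := by
    intro k
    rcases eq_or_ne (Φ (u k)) ⊤ with hk | hk
    · rw [hk, EReal.coe_mul_top_of_pos (inv_pos.mpr (Real.rpow_pos_of_pos hμpos p))]
      exact le_top
    · rw [hcoe _ (HF k), hcoe _ hk, ← EReal.coe_mul, EReal.coe_le_coe_iff]
      exact H2r k hk
  refine ⟨H1, H2, ?_, ?_⟩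
  · apply antitone_nat_of_succ_le
    intro k
    simp only [norm_smul, Real.norm_eq_abs, abs_of_pos (pow_pos hμpos _)]
    calc μ ^ (k + 1) * ‖u (k + 1)‖ ≤ μ ^ (k + 1) * (μ⁻¹ * ‖u k‖) :=
          mul_le_mul_of_nonneg_left (H1 k) (pow_nonneg hμpos.le _)
      _ = μ ^ k * (μ * μ⁻¹) * ‖u k‖ := by rw [pow_succ]; ring
      _ = μ ^ k * ‖u k‖ := by rw [mul_inv_cancel₀ hμpos.ne', mul_one]
  · apply antitone_nat_of_succ_le
    intro k
    have hkey : ((μ ^ (k + 1) : ℝ)) ^ p * (μ ^ p)⁻¹ = ((μ ^ k : ℝ)) ^ p := by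
      rw [← Real.rpow_natCast μ (k + 1), ← Real.rpow_natCast μ k,
        ← Real.rpow_mul hμpos.le, ← Real.rpow_mul hμpos.le,
        ← Real.rpow_neg hμpos.le, ← Real.rpow_add hμpos]
      congr 1
      push_cast
      ring
    rw [hhom _ (pow_nonneg hμpos.le (k + 1)) (u (k + 1)),
      hhom _ (pow_nonneg hμpos.le k) (u k)]
    rcases eq_or_ne (Φ (u k)) ⊤ with hk | hk
    · rw [hk, EReal.coe_mul_top_of_pos (Real.rpow_pos_of_pos (pow_pos hμpos _) p)]
      exact le_top
    · rw [hcoe _ (HF k), hcoe _ hk, ← EReal.coe_mul, ← EReal.coe_mul, EReal.coe_le_coe_iff]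
      calc ((μ ^ (k + 1) : ℝ)) ^ p * (Φ (u (k + 1))).toReal
          ≤ ((μ ^ (k + 1) : ℝ)) ^ p * ((μ ^ p)⁻¹ * (Φ (u k)).toReal) :=
            mul_le_mul_of_nonneg_left (H2r k hk)
              (Real.rpow_nonneg (pow_nonneg hμpos.le _) p)
        _ = (((μ ^ (k + 1) : ℝ)) ^ p * (μ ^ p)⁻¹) * (Φ (u k)).toReal := by ring
        _ = ((μ ^ k : ℝ)) ^ p * (Φ (u k)).toReal := by rw [hkey]
end
end

section
/- If u_0 ∈ closure(Dom(Φ)) \ {0} and (u_k) satisfies ∂Φ(u_k) ∩ J_p(u_{k−1}) ≠ ∅ for all k ∈ ℕ, then u_k ∈ Dom(Φ) \ {0} for all k ≥ 1, and the Rayleigh quotients are nonincreasing: Φ(u_k)/‖u_k‖^p ≤ Φ(u_{k−1})/‖u_{k−1}‖^p. -/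
open Filter Set MeasureTheory Topology
open scoped ENNReal NNReal

noncomputable section

variable {X : Type*} [NormedAddCommGroup X] [NormedSpace ℝ X] [CompleteSpace X]

private lemma euler_aux {p : ℝ} (C D : ℝ)
    (h : ∀ t : ℝ, 0 < t → D * (t - 1) ≤ C * (t ^ p - 1)) : D = p * C := by
  have h1 : HasDerivAt (fun t : ℝ => t ^ p) (p * (1:ℝ) ^ (p-1)) 1 :=
    Real.hasDerivAt_rpow_const (Or.inl one_ne_zero)
  rw [Real.one_rpow, mul_one] at h1
  have hd : HasDerivAt (fun t : ℝ => C * (t ^ p - 1) - D * (t - 1)) (C * p - D * 1) 1 :=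
    ((h1.sub_const 1).const_mul C).sub (((hasDerivAt_id 1).sub_const 1).const_mul D)
  have hmin : IsLocalMin (fun t : ℝ => C * (t ^ p - 1) - D * (t - 1)) 1 := by
    filter_upwards [eventually_gt_nhds one_pos] with t ht
    have := h t ht
    simp only [Real.one_rpow]
    simp
    linarith
  have := hmin.hasDerivAt_eq_zero hd
  linarith

theorem inverse_iteration_rayleigh_monotone (Φ : X → EReal) (p : ℝ) (hp : 1 < p)
    (hnn : ∀ x : X, (0 : EReal) ≤ Φ x)
    (hconv : IsConvexE Φ) (hsc : IsStrictConvexOnDom Φ)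
    (hlsc : LowerSemicontinuous Φ) (hhom : IsHomog Φ p)
    (hcs : ∀ c : ℝ, IsCompact {x : X | Φ x ≤ (c : EReal)})
    (u : ℕ → X) (hu0 : u 0 ∈ closure {x : X | Φ x ≠ ⊤}) (hu0' : u 0 ≠ 0)
    (hit : ∀ k : ℕ, ∃ ξ : X →L[ℝ] ℝ, ξ ∈ ERealSubdiff Φ (u (k + 1)) ∧ ξ ∈ Jdual p (u k)) :
    (∀ k : ℕ, 1 ≤ k → Φ (u k) ≠ ⊤ ∧ u k ≠ 0) ∧
      ∀ k : ℕ, Φ (u (k + 1)) * ((‖u k‖ ^ p : ℝ) : EReal) ≤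
        Φ (u k) * ((‖u (k + 1)‖ ^ p : ℝ) : EReal) := by
  classical
  set S : Set X := {x : X | Φ x ≠ ⊤} with hSdef
  have hSne : S.Nonempty := by
    rw [← closure_nonempty_iff]; exact ⟨u 0, hu0⟩
  obtain ⟨v0, hv0⟩ := hSne
  have hp0 : (0:ℝ) < p := by linarith
  have hp1 : (0:ℝ) < p - 1 := by linarith
  have hnb : ∀ x : X, Φ x ≠ ⊥ := fun x => (lt_of_lt_of_le (by simp) (hnn x)).ne'
  have hcoe : ∀ x : X, Φ x ≠ ⊤ → Φ x = (((Φ x).toReal : ℝ) : EReal) :=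
    fun x hx => (EReal.coe_toReal hx (hnb x)).symm
  have htR : ∀ x : X, Φ x ≠ ⊤ → 0 ≤ (Φ x).toReal := fun x hx => by
    simpa using EReal.toReal_le_toReal (hnn x) (by simp) hx
  have hΦ0 : Φ 0 = 0 := by
    have h := hhom 0 le_rfl v0
    rw [Real.zero_rpow hp0.ne'] at h
    simpa using h
  have hfin : ∀ k : ℕ, Φ (u (k+1)) ≠ ⊤ := by
    intro k
    obtain ⟨ξ, hξ1, _⟩ := hit k
    intro htop
    have h := hξ1 v0
    rw [htop, EReal.top_add_coe] at h
    exact hv0 (top_le_iff.mp h)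
  have hkey : ∀ k : ℕ, u k ≠ 0 ∧ u k ∈ closure S := by
    intro k
    induction k with
    | zero => exact ⟨hu0', hu0⟩
    | succ n ih =>
      obtain ⟨ξ, hξ1, hξ2⟩ := hit n
      refine ⟨?_, subset_closure (hfin n)⟩
      intro h0
      have hub : ∀ w ∈ S, ξ w ≤ 0 := by
        intro w hw
        have hstep : ∀ t : ℝ, 0 < t → ξ w ≤ t ^ (p-1) * (Φ w).toReal := by
          intro t ht
          have h := hξ1 (t • w)
          rw [h0, hΦ0, zero_add, sub_zero, hhom t ht.le w, hcoe w hw,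
            ← EReal.coe_mul] at h
          have h' : ξ (t • w) ≤ t ^ p * (Φ w).toReal := by exact_mod_cast h
          rw [ξ.map_smul, smul_eq_mul] at h'
          have hps : t ^ p = t * t ^ (p - 1) := by
            nth_rewrite 1 [show p = 1 + (p - 1) by ring]
            rw [Real.rpow_add ht, Real.rpow_one]
          have h2 : t * ξ w ≤ t * (t ^ (p-1) * (Φ w).toReal) := by
            rw [← mul_assoc, ← hps]; exact h'
          exact le_of_mul_le_mul_left h2 ht
        have htend : Tendsto (fun t : ℝ => t ^ (p-1) * (Φ w).toReal)
            (nhdsWithin (0:ℝ) (Ioi 0)) (nhds 0) := by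
          have h1 := (Real.continuousAt_rpow_const 0 (p-1) (Or.inr hp1.le)).tendsto
          rw [Real.zero_rpow hp1.ne'] at h1
          simpa using (h1.mono_left nhdsWithin_le_nhds).mul_const (Φ w).toReal
        exact ge_of_tendsto htend
          (eventually_nhdsWithin_of_forall fun t ht => hstep t ht)
      have hcl : ξ (u n) ≤ 0 := by
        have hsub : closure S ⊆ {x : X | ξ x ≤ 0} :=
          closure_minimal (fun w hw => hub w hw)
            (isClosed_le ξ.continuous continuous_const)
        exact hsub ih.2
      have hbpos : 0 < ‖u n‖ ^ p / p :=
        div_pos (Real.rpow_pos_of_pos (norm_pos_iff.mpr ih.1) p) hp0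
      have h0' := hξ2 0
      rw [zero_sub, ξ.map_neg, norm_zero, Real.zero_rpow hp0.ne', zero_div] at h0'
      linarith
  constructor
  · intro k hk
    cases k with
    | zero => omega
    | succ n => exact ⟨hfin n, (hkey (n+1)).1⟩
  · intro k
    obtain ⟨ξ, hξ1, hξ2⟩ := hit k
    have hane : u (k+1) ≠ 0 := (hkey (k+1)).1
    have hbne : u k ≠ 0 := (hkey k).1
    have ha : (0:ℝ) < ‖u (k+1)‖ := norm_pos_iff.mpr hane
    have hb : (0:ℝ) < ‖u k‖ := norm_pos_iff.mpr hbne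
    set a : ℝ := ‖u (k+1)‖ with ha_def
    set b : ℝ := ‖u k‖ with hb_def
    have hfA : Φ (u (k+1)) ≠ ⊤ := hfin k
    set A : ℝ := (Φ (u (k+1))).toReal with hA_def
    have hA0 : 0 ≤ A := htR _ hfA
    have hpa : 0 < a ^ p := Real.rpow_pos_of_pos ha p
    have hpb : 0 < b ^ p := Real.rpow_pos_of_pos hb p
    -- Euler identity for ξ and Φ at u (k+1)
    have hc : ξ (u (k+1)) = p * A := by
      apply euler_aux
      intro t ht
      have h := hξ1 (t • u (k+1))
      rw [hhom t ht.le (u (k+1)), hcoe _ hfA, ← EReal.coe_mul] at h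
      rw [show t • u (k+1) - u (k+1) = (t - 1) • u (k+1) by rw [sub_smul, one_smul],
        ξ.map_smul, smul_eq_mul, ← EReal.coe_add] at h
      have h' : A + (t-1) * ξ (u (k+1)) ≤ t ^ p * A := by exact_mod_cast h
      nlinarith [h']
    -- Euler identity for ξ and the norm at u k
    have hd : ξ (u k) = b ^ p := by
      have h := euler_aux (p := p) (b^p/p) (ξ (u k)) ?_
      · rw [h]; field_simp
      intro t ht
      have h2 := hξ2 (t • u k)
      rw [show t • u k - u k = (t - 1) • u k by rw [sub_smul, one_smul],
        ξ.map_smul, smul_eq_mul, norm_smul, Real.norm_eq_abs, abs_of_pos ht,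
        Real.mul_rpow ht.le (norm_nonneg _)] at h2
      rw [← hb_def] at h2
      rw [div_mul_eq_mul_div, le_div_iff₀ hp0]
      have h3 : (b^p/p + (t-1) * ξ (u k)) * p ≤ (t^p * b^p / p) * p :=
        mul_le_mul_of_nonneg_right h2 hp0.le
      rw [add_mul, div_mul_cancel₀ _ hp0.ne', div_mul_cancel₀ _ hp0.ne'] at h3
      nlinarith [h3]
    -- first key inequality : p A ≤ b^{p-1} a
    have hnorm : ‖(b/a) • u (k+1)‖ = b := by
      rw [norm_smul, Real.norm_eq_abs, abs_of_pos (div_pos hb ha), ← ha_def,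
        div_mul_cancel₀ b ha.ne']
    have hG1 : (b/a) * (p*A) ≤ b ^ p := by
      have h2 := hξ2 ((b/a) • u (k+1))
      rw [ξ.map_sub, ξ.map_smul, smul_eq_mul, hnorm, hc, hd, ← hb_def] at h2
      linarith
    have h1 : p * A ≤ b^(p-1) * a := by
      have hbp : b ^ p = b^(p-1) * b := by
        nth_rewrite 1 [show p = (p-1) + 1 by ring]
        rw [Real.rpow_add hb, Real.rpow_one]
      have h2 : b * (p*A) ≤ b^p * a := by
        rw [div_mul_eq_mul_div, div_le_iff₀ ha] at hG1
        linarith [hG1]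
      have h3 : b * (p*A) ≤ b * (b^(p-1) * a) := by rw [hbp] at h2; nlinarith [h2]
      exact (mul_le_mul_iff_right₀ hb).mp h3
    by_cases hBtop : Φ (u k) = ⊤
    · rw [hBtop, EReal.top_mul_of_pos (by exact_mod_cast hpa : (0:EReal) < ((a^p : ℝ) : EReal))]
      exact le_top
    · set B : ℝ := (Φ (u k)).toReal with hB_def
      have hB0 : 0 ≤ B := htR _ hBtop
      have hG2 : A + ((a/b) * ξ (u k) - ξ (u (k+1))) ≤ (a^p/b^p) * B := by
        have h := hξ1 ((a/b) • u k)
        rw [hhom (a/b) (div_pos ha hb).le (u k), hcoe _ hBtop, ← EReal.coe_mul,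
          hcoe _ hfA, ξ.map_sub, ξ.map_smul, smul_eq_mul, ← EReal.coe_add] at h
        have h' : A + ((a/b) * ξ (u k) - ξ (u (k+1))) ≤ (a/b)^p * B := by
          exact_mod_cast h
        rwa [Real.div_rpow ha.le hb.le] at h'
      rw [hc, hd] at hG2
      have hab : (a/b) * b^p = b^(p-1) * a := by
        have hbp : b ^ p = b^(p-1) * b := by
          nth_rewrite 1 [show p = (p-1) + 1 by ring]
          rw [Real.rpow_add hb, Real.rpow_one]
        rw [hbp]; field_simp
      have hA_le : A ≤ (b^(p-1) * a)/p := by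
        rw [le_div_iff₀ hp0]; linarith [h1]
      have hKp : (b^(p-1) * a)/p ≤ (a^p/b^p) * B := by
        have hid : (p-1) * ((b^(p-1) * a)/p) = b^(p-1) * a - (b^(p-1) * a)/p := by
          field_simp
        have hA2 : (p-1) * A ≤ (p-1) * ((b^(p-1) * a)/p) :=
          mul_le_mul_of_nonneg_left hA_le (by linarith)
        nlinarith [hG2, hab]
      have hfinal : A * b^p ≤ B * a^p := by
        have hmul := mul_le_mul_of_nonneg_right hKp hpb.le
        have hr : (a^p/b^p) * B * (b^p) = B * a^p := by field_simp
        calc A * b^p ≤ ((b^(p-1) * a)/p) * b^p :=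
              mul_le_mul_of_nonneg_right hA_le hpb.le
          _ ≤ B * a^p := by rw [← hr]; exact hmul
      rw [hcoe _ hfA, hcoe _ hBtop, ← EReal.coe_mul, ← EReal.coe_mul]
      exact_mod_cast hfinal
end
end

section
/- Under the same inverse iteration scheme with u_0 ∈ closure(Dom(Φ)) \ {0}, the ratios of successive norms are nonincreasing: ‖u_k‖/‖u_{k+1}‖ ≤ ‖u_{k−1}‖/‖u_k‖ for each k ∈ ℕ. -/
open Filter Set MeasureTheory Topology
open scoped ENNReal NNReal

noncomputable section

variable {X : Type*} [NormedAddCommGroup X] [NormedSpace ℝ X] [CompleteSpace X]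

private lemma deriv_eq_aux (p : ℝ) (hp : 1 < p) (a c : ℝ)
    (h : ∀ t : ℝ, 0 ≤ t → (t - 1) * c ≤ (t ^ p - 1) * a) : c = p * a := by
  set g : ℝ → ℝ := fun t => (t ^ p - 1) * a - (t - 1) * c with hgdef
  have hg1 : g 1 = 0 := by simp [g, Real.one_rpow]
  have hmin : IsLocalMin g 1 := by
    filter_upwards [eventually_gt_nhds (show (0:ℝ) < 1 by norm_num)] with t ht
    have h2 := h t ht.le
    rw [hg1]
    simp only [g]
    linarith
  have hd : HasDerivAt g (p * a - c) 1 := by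
    have h1 : HasDerivAt (fun t : ℝ => t ^ p) (p * (1:ℝ) ^ (p-1)) 1 :=
      Real.hasDerivAt_rpow_const (Or.inl one_ne_zero)
    have h2 : HasDerivAt (fun t : ℝ => (t ^ p - 1) * a) (p * (1:ℝ) ^ (p-1) * a) 1 :=
      (h1.sub_const 1).mul_const a
    have h3 : HasDerivAt (fun t : ℝ => (t - 1) * c) c 1 := by
      simpa using ((hasDerivAt_id (1:ℝ)).sub_const 1).mul_const c
    have h4 := h2.sub h3
    simp only [Real.one_rpow, mul_one] at h4
    exact h4
  have := hmin.hasDerivAt_eq_zero hd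
  linarith

private lemma jdual_self (p : ℝ) (hp : 1 < p) (ξ : X →L[ℝ] ℝ) (u : X)
    (hξ : ξ ∈ Jdual p u) : ξ u = ‖u‖ ^ p := by
  have hp0 : (0:ℝ) < p := by linarith
  have key : ∀ t : ℝ, 0 ≤ t → (t - 1) * ξ u ≤ (t ^ p - 1) * (‖u‖ ^ p / p) := by
    intro t ht
    have h := hξ (t • u)
    have hsub : ξ (t • u - u) = (t - 1) * ξ u := by
      rw [map_sub, _root_.map_smul, smul_eq_mul]; ring
    have hnorm : ‖t • u‖ ^ p = t ^ p * ‖u‖ ^ p := by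
      rw [norm_smul, Real.norm_eq_abs, abs_of_nonneg ht, Real.mul_rpow ht (norm_nonneg u)]
    rw [hsub, hnorm] at h
    have heq : (t ^ p - 1) * (‖u‖ ^ p / p) = t ^ p * ‖u‖ ^ p / p - ‖u‖ ^ p / p := by ring
    linarith
  have h := deriv_eq_aux p hp (‖u‖ ^ p / p) (ξ u) key
  rw [h]
  field_simp

private lemma subdiff_finite (Φ : X → EReal) (ξ : X →L[ℝ] ℝ) (u w : X)
    (hξ : ξ ∈ ERealSubdiff Φ u) (hw : Φ w ≠ ⊤) : Φ u ≠ ⊤ := by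
  intro htop
  have h := hξ w
  rw [htop, EReal.top_add_coe] at h
  exact hw (top_le_iff.mp h)

private lemma subdiff_real (Φ : X → EReal) (ξ : X →L[ℝ] ℝ) (u w : X)
    (hξ : ξ ∈ ERealSubdiff Φ u) (hu : Φ u ≠ ⊤) (hu' : Φ u ≠ ⊥)
    (hw : Φ w ≠ ⊤) (hw' : Φ w ≠ ⊥) :
    (Φ u).toReal + ξ (w - u) ≤ (Φ w).toReal := by
  have h := hξ w
  rw [← EReal.coe_toReal hu hu', ← EReal.coe_toReal hw hw', ← EReal.coe_add] at h
  exact_mod_cast h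

private lemma subdiff_self (Φ : X → EReal) (p : ℝ) (hp : 1 < p) (hhom : IsHomog Φ p)
    (ξ : X →L[ℝ] ℝ) (u : X) (hξ : ξ ∈ ERealSubdiff Φ u) (hu : Φ u ≠ ⊤) (hu' : Φ u ≠ ⊥) :
    ξ u = p * (Φ u).toReal := by
  set a := (Φ u).toReal with ha
  have ha_eq : Φ u = (a : EReal) := (EReal.coe_toReal hu hu').symm
  have key : ∀ t : ℝ, 0 ≤ t → (t - 1) * ξ u ≤ (t ^ p - 1) * a := by
    intro t ht
    have hw_eq : Φ (t • u) = ((t ^ p * a : ℝ) : EReal) := by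
      rw [hhom t ht u, ha_eq, ← EReal.coe_mul]
    have h := subdiff_real Φ ξ u (t • u) hξ hu hu'
      (by rw [hw_eq]; exact EReal.coe_ne_top _) (by rw [hw_eq]; exact EReal.coe_ne_bot _)
    rw [hw_eq, EReal.toReal_coe] at h
    have hval : ξ (t • u - u) = (t - 1) * ξ u := by
      rw [map_sub, _root_.map_smul, smul_eq_mul]; ring
    rw [hval] at h
    linarith
  exact deriv_eq_aux p hp a (ξ u) key

private lemma jdual_bound (p : ℝ) (hp : 1 < p) (ξ : X →L[ℝ] ℝ) (u w : X)
    (hξ : ξ ∈ Jdual p u) : ξ w ≤ ‖u‖ ^ (p - 1) * ‖w‖ := by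
  have hp0 : (0:ℝ) < p := by linarith
  have base : ∀ t : ℝ, 0 ≤ t → t * ξ w ≤ t ^ p * ‖w‖ ^ p / p - ‖u‖ ^ p / p + ξ u := by
    intro t ht
    have h := hξ (t • w)
    have hsub : ξ (t • w - u) = t * ξ w - ξ u := by
      rw [map_sub, _root_.map_smul, smul_eq_mul]
    have hnorm : ‖t • w‖ ^ p = t ^ p * ‖w‖ ^ p := by
      rw [norm_smul, Real.norm_eq_abs, abs_of_nonneg ht, Real.mul_rpow ht (norm_nonneg w)]
    rw [hsub, hnorm] at h
    linarith
  by_cases hu0 : u = 0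
  · subst hu0
    simp only [norm_zero, Real.zero_rpow (show p - 1 ≠ 0 by linarith), zero_mul]
    have hb : ∀ t : ℝ, 0 < t → ξ w ≤ t ^ (p - 1) * (‖w‖ ^ p / p) := by
      intro t ht
      have h := base t ht.le
      rw [map_zero, norm_zero, Real.zero_rpow (ne_of_gt hp0)] at h
      have htp : t ^ p = t * t ^ (p - 1) := by
        rw [← Real.rpow_one_add' (le_of_lt ht) (by intro hc; linarith)]
        congr 1
        ring
      have hr : t ^ p * ‖w‖ ^ p / p = t * (t ^ (p-1) * (‖w‖ ^ p / p)) := by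
        rw [htp]; ring
      refine le_of_mul_le_mul_left ?_ ht
      calc t * ξ w ≤ t ^ p * ‖w‖ ^ p / p - 0 / p + 0 := h
        _ = t * (t ^ (p-1) * (‖w‖ ^ p / p)) := by rw [hr]; ring
    have hlim : Tendsto (fun t : ℝ => t ^ (p-1) * (‖w‖ ^ p / p)) (𝓝[>] 0) (𝓝 0) := by
      have hc : ContinuousAt (fun t : ℝ => t ^ (p-1)) 0 :=
        Real.continuousAt_rpow_const 0 (p-1) (Or.inr (by linarith))
      have h1 : Tendsto (fun t : ℝ => t ^ (p-1)) (𝓝[>] (0:ℝ)) (𝓝 ((0:ℝ) ^ (p-1))) :=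
        hc.tendsto.mono_left nhdsWithin_le_nhds
      have h2 := h1.mul_const (‖w‖ ^ p / p)
      simpa [Real.zero_rpow (show p - 1 ≠ 0 by linarith)] using h2
    refine ge_of_tendsto hlim ?_
    filter_upwards [self_mem_nhdsWithin] with t ht
    exact hb t ht
  · by_cases hw0 : w = 0
    · subst hw0
      simp only [map_zero, norm_zero, mul_zero, le_refl]
    · have hu : (0:ℝ) < ‖u‖ := norm_pos_iff.mpr hu0
      have hw : (0:ℝ) < ‖w‖ := norm_pos_iff.mpr hw0
      have hξu : ξ u = ‖u‖ ^ p := jdual_self p hp ξ u hξ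
      set t := ‖u‖ / ‖w‖ with htdef
      have ht : 0 < t := div_pos hu hw
      have h := base t ht.le
      rw [hξu] at h
      have htp : t ^ p = ‖u‖ ^ p / ‖w‖ ^ p := Real.div_rpow (norm_nonneg u) (norm_nonneg w) p
      have hwp : (0:ℝ) < ‖w‖ ^ p := Real.rpow_pos_of_pos hw p
      have h2 : t * ξ w ≤ ‖u‖ ^ p := by
        rw [htp] at h
        rw [div_mul_eq_mul_div, div_mul_cancel₀ _ (ne_of_gt hwp)] at h
        have hr : t * ξ w = ‖u‖ * ξ w / ‖w‖ := by rw [htdef]; ring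
        linarith
      -- from (‖u‖/‖w‖) * ξ w ≤ ‖u‖^p conclude
      have h3 : ‖u‖ * ξ w ≤ ‖u‖ ^ p * ‖w‖ := by
        rw [htdef, div_mul_eq_mul_div, div_le_iff₀ hw] at h2
        linarith
      have hps : ‖u‖ ^ (p-1) * ‖u‖ = ‖u‖ ^ p := by
        rw [mul_comm, ← Real.rpow_one_add' (norm_nonneg u) (by intro hc; linarith)]
        congr 1
        ring
      rw [← hps] at h3
      nlinarith [Real.rpow_pos_of_pos hu (p-1)]

theorem inverse_iteration_norm_ratio_monotone (Φ : X → EReal) (p : ℝ) (hp : 1 < p)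
    (hnn : ∀ x : X, (0 : EReal) ≤ Φ x)
    (hconv : IsConvexE Φ) (hsc : IsStrictConvexOnDom Φ)
    (hlsc : LowerSemicontinuous Φ) (hhom : IsHomog Φ p)
    (hcs : ∀ c : ℝ, IsCompact {x : X | Φ x ≤ (c : EReal)})
    (u : ℕ → X) (hu0 : u 0 ∈ closure {x : X | Φ x ≠ ⊤}) (hu0' : u 0 ≠ 0)
    (hit : ∀ k : ℕ, ∃ ξ : X →L[ℝ] ℝ, ξ ∈ ERealSubdiff Φ (u (k + 1)) ∧ ξ ∈ Jdual p (u k)) :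
    ∀ k : ℕ, ‖u (k + 1)‖ / ‖u (k + 2)‖ ≤ ‖u k‖ / ‖u (k + 1)‖ := by
  intro k
  have hp0 : (0:ℝ) < p := by linarith
  have hp1 : (0:ℝ) < p - 1 := by linarith
  by_cases h1 : u (k+1) = 0
  · rw [h1, norm_zero, zero_div]
    positivity
  by_cases h2 : u (k+2) = 0
  · rw [h2, norm_zero, div_zero]
    positivity
  obtain ⟨ξ₁, hs₁, hj₁⟩ := hit k
  obtain ⟨ξ₂, hs₂, hj₂⟩ := hit (k+1)
  have hdom : ∃ w : X, Φ w ≠ ⊤ := by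
    by_contra h
    push_neg at h
    have he : {x : X | Φ x ≠ ⊤} = ∅ := by
      ext x; simp [h x]
    rw [he, closure_empty] at hu0
    exact hu0
  obtain ⟨w₀, hw₀⟩ := hdom
  have hbot : ∀ x : X, Φ x ≠ ⊥ := by
    intro x
    have : (⊥ : EReal) < Φ x := lt_of_lt_of_le (by norm_num) (hnn x)
    exact this.ne'
  have fin₁ : Φ (u (k+1)) ≠ ⊤ := subdiff_finite Φ ξ₁ _ w₀ hs₁ hw₀
  have fin₂ : Φ (u (k+2)) ≠ ⊤ := subdiff_finite Φ ξ₂ _ w₀ hs₂ hw₀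
  set a := (Φ (u (k+1))).toReal with hadef
  set b := (Φ (u (k+2))).toReal with hbdef
  have ha_eq : Φ (u (k+1)) = (a : EReal) := (EReal.coe_toReal fin₁ (hbot _)).symm
  have hb_eq : Φ (u (k+2)) = (b : EReal) := (EReal.coe_toReal fin₂ (hbot _)).symm
  have ha0 : 0 ≤ a := EReal.coe_nonneg.mp (ha_eq ▸ hnn (u (k+1)))
  have hb0 : 0 ≤ b := EReal.coe_nonneg.mp (hb_eq ▸ hnn (u (k+2)))
  have hN : ξ₂ (u (k+1)) = ‖u (k+1)‖ ^ p := jdual_self p hp ξ₂ _ hj₂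
  have hpa : ξ₁ (u (k+1)) = p * a := subdiff_self Φ p hp hhom ξ₁ _ hs₁ fin₁ (hbot _)
  have hpb : ξ₂ (u (k+2)) = p * b := subdiff_self Φ p hp hhom ξ₂ _ hs₂ fin₂ (hbot _)
  have fact1 : p * a ≤ ‖u k‖ ^ (p-1) * ‖u (k+1)‖ := by
    rw [← hpa]; exact jdual_bound p hp ξ₁ (u k) (u (k+1)) hj₁
  have fact2 : p * b ≤ ‖u (k+1)‖ ^ (p-1) * ‖u (k+2)‖ := by
    rw [← hpb]; exact jdual_bound p hp ξ₂ (u (k+1)) (u (k+2)) hj₂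
  have fact3 : ∀ t : ℝ, 0 ≤ t →
      t * ‖u (k+1)‖ ^ p ≤ t ^ p * a + (p - 1) * b := by
    intro t ht
    have hw_eq : Φ (t • u (k+1)) = ((t ^ p * a : ℝ) : EReal) := by
      rw [hhom t ht (u (k+1)), ha_eq, ← EReal.coe_mul]
    have h := subdiff_real Φ ξ₂ (u (k+2)) (t • u (k+1)) hs₂ fin₂ (hbot _)
      (by rw [hw_eq]; exact EReal.coe_ne_top _) (by rw [hw_eq]; exact EReal.coe_ne_bot _)
    rw [hw_eq, EReal.toReal_coe] at h
    have hval : ξ₂ (t • u (k+1) - u (k+2)) = t * ‖u (k+1)‖ ^ p - p * b := by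
      rw [map_sub, _root_.map_smul, smul_eq_mul, hN, hpb]
    rw [hval] at h
    linarith
  have hB : (0:ℝ) < ‖u (k+1)‖ := norm_pos_iff.mpr h1
  have hC : (0:ℝ) < ‖u (k+2)‖ := norm_pos_iff.mpr h2
  have hBp : (0:ℝ) < ‖u (k+1)‖ ^ p := Real.rpow_pos_of_pos hB p
  by_cases hk0 : u k = 0
  · exfalso
    rw [hk0, norm_zero, Real.zero_rpow (ne_of_gt hp1), zero_mul] at fact1
    have ha : a = 0 := by nlinarith
    set t0 : ℝ := ((p-1)*b + 1)/(‖u (k+1)‖ ^ p) with ht0def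
    have ht0 : 0 ≤ t0 := by positivity
    have h := fact3 t0 ht0
    rw [ha, mul_zero, zero_add, ht0def, div_mul_cancel₀ _ (ne_of_gt hBp)] at h
    linarith
  have hA : (0:ℝ) < ‖u k‖ := norm_pos_iff.mpr hk0
  have hAp : (0:ℝ) < ‖u k‖ ^ p := Real.rpow_pos_of_pos hA p
  set A := ‖u k‖ with hAdef
  set B := ‖u (k+1)‖ with hBdef
  set C := ‖u (k+2)‖ with hCdef
  set Ap := A ^ p with hApdef
  set Bp := B ^ p with hBpdef
  -- rewrite the rpow exponents p - 1
  have hA1 : A ^ (p-1) = Ap / A := by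
    rw [hApdef, Real.rpow_sub hA, Real.rpow_one]
  have hB1 : B ^ (p-1) = Bp / B := by
    rw [hBpdef, Real.rpow_sub hB, Real.rpow_one]
  rw [hA1] at fact1
  rw [hB1] at fact2
  have ht : (0:ℝ) ≤ B / A := le_of_lt (div_pos hB hA)
  have h3 := fact3 (B / A) ht
  have htp : (B / A) ^ p = Bp / Ap := Real.div_rpow (norm_nonneg _) (norm_nonneg _) p
  rw [htp] at h3
  -- clear denominators
  have f1 : p * a * A ≤ Ap * B := by
    rw [div_mul_eq_mul_div, le_div_iff₀ hA] at fact1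
    linarith
  have f2 : p * b * B ≤ Bp * C := by
    rw [div_mul_eq_mul_div, le_div_iff₀ hB] at fact2
    linarith
  have f3 : B * Bp * Ap ≤ Bp * a * A + (p-1) * b * (A * Ap) := by
    have hmul := mul_le_mul_of_nonneg_right h3 (le_of_lt (mul_pos hA hAp))
    have e1 : B / A * Bp * (A * Ap) = B * Bp * Ap := by
      field_simp
    have e2 : (Bp / Ap * a + (p-1) * b) * (A * Ap) = Bp * a * A + (p-1) * b * (A * Ap) := by
      field_simp
    rw [e1, e2] at hmul
    exact hmul
  rw [div_le_div_iff₀ hC hB]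
  nlinarith [mul_le_mul_of_nonneg_right f3 (by positivity : (0:ℝ) ≤ p * B),
    mul_le_mul_of_nonneg_right f1 (le_of_lt (mul_pos hBp hB)),
    mul_le_mul_of_nonneg_right f2 (by positivity : (0:ℝ) ≤ (p-1) * (A * Ap)),
    mul_pos (mul_pos hp1 hBp) hAp]
end
end

section
/- Assume λ_p is simple (any two nonzero minimizers of Φ(u)/‖u‖^p are linearly dependent). If u_0 ≠ 0 minimizes Φ(u)/‖u‖^p and u_1 satisfies ∂Φ(u_1) ∩ J_p(u_0) ≠ ∅, then u_1 = μ_p^{−1} u_0. Consequently the unique inverse-iteration sequence started at u_0 is u_k = μ_p^{−k} u_0. -/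
open Filter Set MeasureTheory Topology
open scoped ENNReal NNReal

noncomputable section

variable {X : Type*} [NormedAddCommGroup X] [NormedSpace ℝ X] [CompleteSpace X]

lemma deriv_helper (c e p : ℝ) (hp : 1 < p)
    (h : ∀ t : ℝ, 0 ≤ t → c + (t - 1) * e ≤ t ^ p * c) : e = p * c := by
  set f : ℝ → ℝ := fun t => t ^ p * c - ((t - 1) * e + c) with hf
  have hd : HasDerivAt f (p * (1:ℝ) ^ (p - 1) * c - 1 * e) 1 := by
    have h1 : HasDerivAt (fun t : ℝ => t ^ p) (p * (1:ℝ) ^ (p - 1)) 1 :=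
      Real.hasDerivAt_rpow_const (Or.inr hp.le)
    have h2 : HasDerivAt (fun t : ℝ => (t - 1) * e + c) (1 * e) 1 :=
      (((hasDerivAt_id 1).sub_const 1).mul_const e).add_const c
    exact (h1.mul_const c).sub h2
  have hmin : IsLocalMin f 1 := by
    have hev : ∀ᶠ t in 𝓝 (1:ℝ), f 1 ≤ f t := by
      filter_upwards [Ioi_mem_nhds (by norm_num : (0:ℝ) < 1)] with t ht
      have := h t ht.le
      simp only [hf, Real.one_rpow]
      nlinarith
    exact hev
  have := hmin.hasDerivAt_eq_zero hd
  rw [Real.one_rpow] at this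
  nlinarith [this]

set_option maxHeartbeats 1000000 in
lemma key_step (Φ : X → EReal) (p lam μ : ℝ) (hp : 1 < p)
    (hnn : ∀ x : X, (0 : EReal) ≤ Φ x)
    (hhom : IsHomog Φ p)
    (hlam : lam = sInf (RayleighSet Φ p)) (hpos : 0 < lam)
    (hμ : μ = lam ^ (1 / (p - 1)))
    (hsimple : IsSimple Φ p lam)
    (v : X) (hv : v ≠ 0) (hvfin : Φ v ≠ ⊤)
    (hvmin : lam = p * (Φ v).toReal / ‖v‖ ^ p)
    (w : X) (h1 : ∃ ξ : X →L[ℝ] ℝ, ξ ∈ ERealSubdiff Φ w ∧ ξ ∈ Jdual p v) :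
    w = μ⁻¹ • v := by
  obtain ⟨ξ, hsub, hJ⟩ := h1
  have hp0 : (0:ℝ) < p := by linarith
  have hp1 : (0:ℝ) < p - 1 := by linarith
  have hvn : (0:ℝ) < ‖v‖ := norm_pos_iff.mpr hv
  have hvp : (0:ℝ) < ‖v‖ ^ p := Real.rpow_pos_of_pos hvn p
  have hμpos : (0:ℝ) < μ := hμ ▸ Real.rpow_pos_of_pos hpos _
  set s : ℝ := μ⁻¹ with hs
  have hspos : (0:ℝ) < s := inv_pos.mpr hμpos
  have hμp1 : μ ^ (p - 1) = lam := by
    rw [hμ, ← Real.rpow_mul hpos.le, one_div, inv_mul_cancel₀ hp1.ne', Real.rpow_one]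
  have hsp1 : s ^ (p - 1) = lam⁻¹ := by
    rw [hs, Real.inv_rpow hμpos.le, hμp1]
  have hsp : s ^ p = lam⁻¹ * s := by
    have e : p - 1 + 1 = p := by ring
    have h := Real.rpow_add_one hspos.ne' (p - 1)
    rw [e, hsp1] at h
    exact h
  have hnvp : ‖v‖ ^ p = ‖v‖ ^ (p - 1) * ‖v‖ := by
    have e : p - 1 + 1 = p := by ring
    have h := Real.rpow_add_one hvn.ne' (p - 1)
    rw [e] at h
    exact h
  have hbot : ∀ x : X, Φ x ≠ ⊥ := fun x => (EReal.bot_lt_zero.trans_le (hnn x)).ne'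
  set cv : ℝ := (Φ v).toReal with hcvdef
  have hcv : Φ v = (cv : EReal) := (EReal.coe_toReal hvfin (hbot v)).symm
  have hcvval : p * cv = lam * ‖v‖ ^ p := by
    rw [hvmin]; field_simp
  have hΦ0 : Φ 0 = 0 := by
    have h := hhom 0 le_rfl v
    rw [zero_smul, Real.zero_rpow hp0.ne', hcv, ← EReal.coe_mul] at h
    rw [h]; norm_num
  -- Jdual facts
  have hJv : ξ v = ‖v‖ ^ p := by
    have key : ∀ t : ℝ, 0 ≤ t → ‖v‖ ^ p / p + (t - 1) * ξ v ≤ t ^ p * (‖v‖ ^ p / p) := by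
      intro t ht
      have h := hJ (t • v)
      have e1 : ξ (t • v - v) = (t - 1) * ξ v := by
        rw [show t • v - v = (t - 1) • v by rw [sub_smul, one_smul], ξ.map_smul, smul_eq_mul]
      have e2 : ‖t • v‖ ^ p = t ^ p * ‖v‖ ^ p := by
        rw [norm_smul, Real.norm_eq_abs, abs_of_nonneg ht, Real.mul_rpow ht (norm_nonneg v)]
      rw [e1, e2] at h
      rw [← mul_div_assoc]
      exact h
    have := deriv_helper (‖v‖ ^ p / p) (ξ v) p hp key
    rw [this]; field_simp
  -- subdifferential facts
  have hwfin : Φ w ≠ ⊤ := by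
    intro htop
    have h := hsub v
    rw [htop, EReal.top_add_coe] at h
    exact hvfin (top_le_iff.mp h)
  set c1 : ℝ := (Φ w).toReal with hc1def
  have hc1 : Φ w = (c1 : EReal) := (EReal.coe_toReal hwfin (hbot w)).symm
  have hc1nn : 0 ≤ c1 := by
    have := hnn w
    rw [hc1] at this
    exact_mod_cast this
  have hsubR : ∀ (w' : X) (r : ℝ), Φ w' = (r : EReal) → c1 + ξ (w' - w) ≤ r := by
    intro w' r hr
    have h := hsub w'
    rw [hc1, hr, ← EReal.coe_add] at h
    exact_mod_cast h
  have hξw : ξ w = p * c1 := by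
    apply deriv_helper c1 (ξ w) p hp
    intro t ht
    have hfw : Φ (t • w) = ((t ^ p * c1 : ℝ) : EReal) := by
      rw [hhom t ht w, hc1, ← EReal.coe_mul]
    have h := hsubR (t • w) _ hfw
    have e1 : ξ (t • w - w) = (t - 1) * ξ w := by
      rw [show t • w - w = (t - 1) • w by rw [sub_smul, one_smul], ξ.map_smul, smul_eq_mul]
    rw [e1] at h
    linarith
  -- lower bound: s ‖v‖^p ≤ p c1
  have hlow : s * ‖v‖ ^ p ≤ p * c1 := by
    have hfsv : Φ (s • v) = ((s ^ p * cv : ℝ) : EReal) := by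
      rw [hhom s hspos.le v, hcv, ← EReal.coe_mul]
    have h := hsubR (s • v) _ hfsv
    have e1 : ξ (s • v - w) = s * ξ v - ξ w := by
      rw [ξ.map_sub, ξ.map_smul, smul_eq_mul]
    rw [e1, hJv, hξw] at h
    have e2 : s ^ p * cv = s * ‖v‖ ^ p / p := by
      rw [hsp]
      have : cv = lam * ‖v‖ ^ p / p := by field_simp at hcvval ⊢; linarith
      rw [this]
      field_simp
    rw [e2] at h
    have h3 := mul_le_mul_of_nonneg_left h hp0.le
    have hAp : p * (s * ‖v‖ ^ p / p) = s * ‖v‖ ^ p := by field_simp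
    rw [hAp] at h3
    nlinarith [h3, hp1]
  have hApos : 0 < s * ‖v‖ ^ p := mul_pos hspos hvp
  have hc1pos : 0 < c1 := by nlinarith
  have hwne : w ≠ 0 := by
    intro h0
    rw [h0, hΦ0] at hc1
    have : (0:ℝ) = c1 := by exact_mod_cast hc1
    linarith
  have hwn : (0:ℝ) < ‖w‖ := norm_pos_iff.mpr hwne
  have hwp : (0:ℝ) < ‖w‖ ^ p := Real.rpow_pos_of_pos hwn p
  -- upper bound: p c1 ≤ ‖v‖^(p-1) ‖w‖
  have hup : p * c1 ≤ ‖v‖ ^ (p - 1) * ‖w‖ := by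
    have h := hJ ((‖v‖ / ‖w‖) • w)
    have e2 : ‖(‖v‖ / ‖w‖) • w‖ = ‖v‖ := by
      rw [norm_smul, Real.norm_eq_abs, abs_of_nonneg (by positivity), div_mul_cancel₀ _ hwn.ne']
    rw [ξ.map_sub, ξ.map_smul, smul_eq_mul, e2, hJv, hξw] at h
    -- h : ‖v‖^p/p + (‖v‖/‖w‖ * (p*c1) - ‖v‖^p) ≤ ‖v‖^p/p
    have h4 : ‖v‖ / ‖w‖ * (p * c1) ≤ ‖v‖ ^ p := by linarith
    rw [div_mul_eq_mul_div, div_le_iff₀ hwn, hnvp] at h4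
    -- h4 : ‖v‖ * (p*c1) ≤ ‖v‖^(p-1) * ‖v‖ * ‖w‖
    nlinarith [h4, hvn]
  -- Rayleigh bound: lam ‖w‖^p ≤ p c1
  have hray : lam * ‖w‖ ^ p ≤ p * c1 := by
    have hmem : p * c1 / ‖w‖ ^ p ∈ RayleighSet Φ p := ⟨w, hwne, hwfin, rfl⟩
    have hbdd : BddBelow (RayleighSet Φ p) := by
      refine ⟨0, fun r hr => ?_⟩
      obtain ⟨u, hu, huf, rfl⟩ := hr
      have h0 : (0:ℝ) ≤ (Φ u).toReal := by
        have := hnn u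
        rw [← EReal.coe_toReal huf (hbot u)] at this
        exact_mod_cast this
      exact div_nonneg (mul_nonneg hp0.le h0) (Real.rpow_nonneg (norm_nonneg u) p)
    have h := hlam ▸ csInf_le hbdd hmem
    rw [le_div_iff₀ hwp] at h
    linarith
  -- norm equality
  have hv1 : (0:ℝ) < ‖v‖ ^ (p - 1) := Real.rpow_pos_of_pos hvn _
  have hnorm_le : ‖w‖ ≤ s * ‖v‖ := by
    by_contra hcon
    push_neg at hcon
    have h6 : (s * ‖v‖) ^ (p - 1) < ‖w‖ ^ (p - 1) :=
      Real.rpow_lt_rpow (by positivity) hcon hp1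
    have e3 : (s * ‖v‖) ^ (p - 1) = lam⁻¹ * ‖v‖ ^ (p - 1) := by
      rw [Real.mul_rpow hspos.le (norm_nonneg v), hsp1]
    rw [e3] at h6
    have h7 : lam * ‖w‖ ^ (p - 1) ≤ ‖v‖ ^ (p - 1) := by
      have hh := hray.trans hup
      have ew : ‖w‖ ^ p = ‖w‖ ^ (p - 1) * ‖w‖ := by
        have e : p - 1 + 1 = p := by ring
        have h := Real.rpow_add_one hwn.ne' (p - 1)
        rw [e] at h
        exact h
      rw [ew] at hh
      nlinarith [hh, hwn]
    have h8 := mul_lt_mul_of_pos_left h6 hpos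
    rw [← mul_assoc, mul_inv_cancel₀ hpos.ne', one_mul] at h8
    linarith
  have hnorm_ge : s * ‖v‖ ≤ ‖w‖ := by
    have h9 := hlow.trans hup
    rw [hnvp] at h9
    nlinarith [h9, hv1]
  have hnorm : ‖w‖ = s * ‖v‖ := le_antisymm hnorm_le hnorm_ge
  -- equality in Rayleigh quotient
  have e4 : lam * ‖w‖ ^ p = s * ‖v‖ ^ p := by
    rw [hnorm, Real.mul_rpow hspos.le (norm_nonneg v), hsp]
    field_simp
  have hup2 : p * c1 ≤ s * ‖v‖ ^ p := by
    calc p * c1 ≤ ‖v‖ ^ (p - 1) * ‖w‖ := hup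
      _ = s * ‖v‖ ^ p := by rw [hnorm, hnvp]; ring
  have e5 : p * c1 = lam * ‖w‖ ^ p := by linarith [hray, e4 ▸ hup2]
  have hwmin : lam = p * (Φ w).toReal / ‖w‖ ^ p := by
    rw [← hc1def, eq_div_iff hwp.ne']
    linarith
  obtain ⟨c, hcw⟩ := hsimple v w hv hwne hvfin hwfin hvmin hwmin
  have e6 : ξ w = c * ‖v‖ ^ p := by rw [hcw, ξ.map_smul, smul_eq_mul, hJv]
  have e7 : c * ‖v‖ ^ p = s * ‖v‖ ^ p := by rw [← e6, hξw, e5, e4]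
  have hc : c = s := mul_right_cancel₀ hvp.ne' e7
  rw [hcw, hc]

theorem inverse_iteration_uniqueness (Φ : X → EReal) (p lam μ : ℝ) (hp : 1 < p)
    (hnn : ∀ x : X, (0 : EReal) ≤ Φ x)
    (hconv : IsConvexE Φ) (hsc : IsStrictConvexOnDom Φ)
    (hlsc : LowerSemicontinuous Φ) (hhom : IsHomog Φ p)
    (hcs : ∀ c : ℝ, IsCompact {x : X | Φ x ≤ (c : EReal)})
    (hlam : lam = sInf (RayleighSet Φ p)) (hpos : 0 < lam)
    (hμ : μ = lam ^ (1 / (p - 1)))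
    (hsimple : IsSimple Φ p lam)
    (u0 : X) (hu0 : u0 ≠ 0) (hu0fin : Φ u0 ≠ ⊤)
    (hmin : lam = p * (Φ u0).toReal / ‖u0‖ ^ p)
    (u1 : X) (h1 : ∃ ξ : X →L[ℝ] ℝ, ξ ∈ ERealSubdiff Φ u1 ∧ ξ ∈ Jdual p u0) :
    u1 = μ⁻¹ • u0 ∧
      ∀ u : ℕ → X, u 0 = u0 →
        (∀ k : ℕ, ∃ ξ : X →L[ℝ] ℝ, ξ ∈ ERealSubdiff Φ (u (k + 1)) ∧ ξ ∈ Jdual p (u k)) →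
        ∀ k : ℕ, u k = (μ⁻¹ ^ k : ℝ) • u0 := by
  have hμpos : (0:ℝ) < μ := hμ ▸ Real.rpow_pos_of_pos hpos _
  have hp0 : (0:ℝ) < p := by linarith
  have hbot : ∀ x : X, Φ x ≠ ⊥ := fun x => (EReal.bot_lt_zero.trans_le (hnn x)).ne'
  constructor
  · exact key_step Φ p lam μ hp hnn hhom hlam hpos hμ hsimple u0 hu0 hu0fin hmin u1 h1
  · intro u h0 hrec k
    induction k with
    | zero => simpa using h0
    | succ k ih =>
      set t : ℝ := μ⁻¹ ^ k with htdef
      have htpos : (0:ℝ) < t := pow_pos (inv_pos.mpr hμpos) k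
      have htp : (0:ℝ) < t ^ p := Real.rpow_pos_of_pos htpos p
      have hu0n : (0:ℝ) < ‖u0‖ := norm_pos_iff.mpr hu0
      have hu0p : (0:ℝ) < ‖u0‖ ^ p := Real.rpow_pos_of_pos hu0n p
      set c0 : ℝ := (Φ u0).toReal with hc0def
      have hc0 : Φ u0 = (c0 : EReal) := (EReal.coe_toReal hu0fin (hbot u0)).symm
      have hvfin2 : Φ (u k) = ((t ^ p * c0 : ℝ) : EReal) := by
        rw [ih, hhom t htpos.le u0, hc0, ← EReal.coe_mul]
      have hvne : u k ≠ 0 := by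
        rw [ih]; exact smul_ne_zero htpos.ne' hu0
      have hvtop : Φ (u k) ≠ ⊤ := by rw [hvfin2]; exact EReal.coe_ne_top _
      have hvnorm : ‖u k‖ ^ p = t ^ p * ‖u0‖ ^ p := by
        rw [ih, norm_smul, Real.norm_eq_abs, abs_of_nonneg htpos.le,
          Real.mul_rpow htpos.le (norm_nonneg u0)]
      have hvmin2 : lam = p * (Φ (u k)).toReal / ‖u k‖ ^ p := by
        rw [hvfin2, EReal.toReal_coe, hvnorm, hmin,
          div_eq_div_iff hu0p.ne' (by positivity)]
        ring
      have hstep := key_step Φ p lam μ hp hnn hhom hlam hpos hμ hsimple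
        (u k) hvne hvtop hvmin2 (u (k + 1)) (hrec k)
      rw [hstep, ih, smul_smul, htdef, ← pow_succ']
end
end

section
/- Suppose g^j → g in X and for each j, u^j satisfies ∂Φ(u^j) ∩ J_p(g^j) ≠ ∅. Then there is a subsequence (u^{j_ℓ}) converging to some u with ∂Φ(u) ∩ J_p(g) ≠ ∅ and Φ(u) = lim_ℓ Φ(u^{j_ℓ}). -/
open Filter Set MeasureTheory Topology
open Pointwise
open scoped ENNReal NNReal

noncomputable section

variable {X : Type*} [NormedAddCommGroup X] [NormedSpace ℝ X] [CompleteSpace X]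

lemma ERealtoReal_nonneg {x : EReal} (h : 0 ≤ x) : 0 ≤ x.toReal := by
  rcases eq_or_ne x ⊤ with rfl | hx
  · simp
  · simpa using EReal.toReal_le_toReal h (by simp) hx

lemma psi_convex (p : ℝ) (hp : 1 < p) (y1 y2 : X) {a b : ℝ}
    (ha : 0 ≤ a) (hb : 0 ≤ b) (hab : a + b = 1) :
    ‖a • y1 + b • y2‖ ^ p ≤ a * ‖y1‖ ^ p + b * ‖y2‖ ^ p := by
  have h1 : ‖a • y1 + b • y2‖ ≤ a * ‖y1‖ + b * ‖y2‖ := by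
    calc ‖a • y1 + b • y2‖ ≤ ‖a • y1‖ + ‖b • y2‖ := norm_add_le _ _
    _ = a * ‖y1‖ + b * ‖y2‖ := by
        rw [norm_smul, norm_smul, Real.norm_of_nonneg ha, Real.norm_of_nonneg hb]
  have h2 : ‖a • y1 + b • y2‖ ^ p ≤ (a * ‖y1‖ + b * ‖y2‖) ^ p :=
    Real.rpow_le_rpow (norm_nonneg _) h1 (by linarith)
  have h3 := (convexOn_rpow hp.le).2 (mem_Ici.2 (norm_nonneg y1)) (mem_Ici.2 (norm_nonneg y2)) ha hb hab
  simp only [smul_eq_mul] at h3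
  exact h2.trans h3

lemma exists_xi_of_min (Φ : X → EReal) (p : ℝ) (hp : 1 < p)
    (hnn : ∀ x : X, (0 : EReal) ≤ Φ x) (hconv : IsConvexE Φ)
    (u g : X) (hu : Φ u ≠ ⊤)
    (hmin : ∀ w : X, (((Φ u).toReal + ‖g‖ ^ p / p : ℝ) : EReal) ≤
      Φ w + ((‖u + g - w‖ ^ p / p : ℝ) : EReal)) :
    ∃ ξ : X →L[ℝ] ℝ, ξ ∈ ERealSubdiff Φ u ∧ ξ ∈ Jdual p g := by
  have hp0 : (0:ℝ) < p := by linarith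
  have hnb : ∀ x : X, Φ x ≠ ⊥ := fun x => ne_of_gt (lt_of_lt_of_le (by simp) (hnn x))
  set b : ℝ := (Φ u).toReal with hb
  have hcu : ((b : ℝ) : EReal) = Φ u := EReal.coe_toReal hu (hnb u)
  set ψ : X → ℝ := fun y => ‖y‖ ^ p / p with hψ
  have hψ0 : ∀ y, 0 ≤ ψ y := fun y => div_nonneg (Real.rpow_nonneg (norm_nonneg _) _) hp0.le
  -- the shifted value set
  set S : X → Set ℝ := fun z =>
    (fun w => (Φ w).toReal + ψ (u + g + z - w)) '' {w | Φ w ≠ ⊤} with hS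
  have hSne : ∀ z, (S z).Nonempty := fun z => ⟨_, u, hu, rfl⟩
  have hSlb : ∀ z, ∀ r ∈ S z, (0:ℝ) ≤ r := by
    rintro z r ⟨w, hw, rfl⟩
    exact add_nonneg (ERealtoReal_nonneg (hnn w)) (hψ0 _)
  have hSbdd : ∀ z, BddBelow (S z) := fun z => ⟨0, hSlb z⟩
  set G : X → ℝ := fun z => sInf (S z) - (b + ψ g) with hG
  -- G z ≤ F1 z
  have hGF1 : ∀ z : X, Φ (u + z) ≠ ⊤ → G z ≤ (Φ (u + z)).toReal - b := by
    intro z hz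
    have hm : (Φ (u + z)).toReal + ψ (u + g + z - (u + z)) ∈ S z := ⟨u + z, hz, rfl⟩
    have h1 : sInf (S z) ≤ (Φ (u + z)).toReal + ψ g := by
      have e : u + g + z - (u + z) = g := by abel
      rw [e] at hm
      exact csInf_le (hSbdd z) hm
    simp only [hG]; linarith
  -- G z ≤ F2 z
  have hGF2 : ∀ z : X, G z ≤ ψ (g + z) - ψ g := by
    intro z
    have hm : (Φ u).toReal + ψ (u + g + z - u) ∈ S z := ⟨u, hu, rfl⟩
    have e : u + g + z - u = g + z := by abel
    rw [e] at hm
    have h1 : sInf (S z) ≤ b + ψ (g + z) := csInf_le (hSbdd z) hm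
    simp only [hG]; linarith
  -- realify hmin
  have hminR : ∀ w : X, Φ w ≠ ⊤ →
      b + ψ g ≤ (Φ w).toReal + ψ (u + g - w) := by
    intro w hw
    have h := hmin w
    rw [← EReal.coe_toReal hw (hnb w), ← EReal.coe_add] at h
    exact_mod_cast h
  have hG0 : G 0 = 0 := by
    have h1 : G 0 ≤ 0 := by simpa using hGF2 0
    have h2 : b + ψ g ≤ sInf (S 0) := by
      apply le_csInf (hSne 0)
      rintro r ⟨w, hw, rfl⟩
      show b + ψ g ≤ (Φ w).toReal + ψ (u + g + 0 - w)
      have e : u + g + 0 - w = u + g - w := by abel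
      rw [e]; exact hminR w hw
    have : (0:ℝ) ≤ G 0 := by simp only [hG]; linarith
    linarith
  -- convexity of G
  have hGconv : ∀ z1 z2 : X, ∀ a c : ℝ, 0 ≤ a → 0 ≤ c → a + c = 1 →
      G (a • z1 + c • z2) ≤ a * G z1 + c * G z2 := by
    intro z1 z2 a c ha hc hac
    rcases ha.eq_or_lt with ha0 | ha0
    · have hc1 : c = 1 := by linarith
      simp [← ha0, hc1]
    rcases hc.eq_or_lt with hc0 | hc0
    · have ha1 : a = 1 := by linarith
      simp [← hc0, ha1]
    -- main case: both positive
    have key : ∀ r1 ∈ S z1, ∀ r2 ∈ S z2,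
        sInf (S (a • z1 + c • z2)) ≤ a * r1 + c * r2 := by
      rintro r1 ⟨w1, hw1, rfl⟩ r2 ⟨w2, hw2, rfl⟩
      set w := a • w1 + c • w2 with hw
      have hΦw : Φ w ≤ (↑(a * (Φ w1).toReal + c * (Φ w2).toReal) : EReal) := by
        have h := hconv w1 w2 a c ha hc hac
        rw [← EReal.coe_toReal hw1 (hnb w1), ← EReal.coe_toReal hw2 (hnb w2)] at h
        rw [← EReal.coe_mul, ← EReal.coe_mul, ← EReal.coe_add] at h
        exact h
      have hΦwt : Φ w ≠ ⊤ := ne_top_of_le_ne_top (EReal.coe_ne_top _) hΦw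
      have hΦwr : (Φ w).toReal ≤ a * (Φ w1).toReal + c * (Φ w2).toReal := by
        simpa only [EReal.toReal_coe] using EReal.toReal_le_toReal hΦw (hnb w) (EReal.coe_ne_top _)
      have hvec : u + g + (a • z1 + c • z2) - w =
          a • (u + g + z1 - w1) + c • (u + g + z2 - w2) := by
        have hc' : c = 1 - a := by linarith
        simp only [hw, hc']
        module
      have hψw : ψ (u + g + (a • z1 + c • z2) - w) ≤
          a * ψ (u + g + z1 - w1) + c * ψ (u + g + z2 - w2) := by
        rw [hvec]
        have h := psi_convex p hp (u + g + z1 - w1) (u + g + z2 - w2) ha hc hac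
        simp only [hψ]
        rw [show a * (‖u + g + z1 - w1‖ ^ p / p) + c * (‖u + g + z2 - w2‖ ^ p / p)
            = (a * ‖u + g + z1 - w1‖ ^ p + c * ‖u + g + z2 - w2‖ ^ p) / p by ring]
        exact (div_le_div_iff_of_pos_right hp0).mpr h
      have hmem : (Φ w).toReal + ψ (u + g + (a • z1 + c • z2) - w)
          ∈ S (a • z1 + c • z2) := ⟨w, hΦwt, rfl⟩
      calc sInf (S (a • z1 + c • z2)) ≤ (Φ w).toReal + ψ (u + g + (a • z1 + c • z2) - w) :=
            csInf_le (hSbdd _) hmem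
        _ ≤ a * ((Φ w1).toReal + ψ (u + g + z1 - w1)) + c * ((Φ w2).toReal + ψ (u + g + z2 - w2)) := by
            nlinarith [hΦwr, hψw]
    have key2 : sInf (S (a • z1 + c • z2)) ≤ a * sInf (S z1) + c * sInf (S z2) := by
      have step1 : ∀ r2 ∈ S z2, sInf (S (a • z1 + c • z2)) ≤ a * sInf (S z1) + c * r2 := by
        intro r2 hr2
        have h1 : (sInf (S (a • z1 + c • z2)) - c * r2) / a ≤ sInf (S z1) := by
          apply le_csInf (hSne z1)
          intro r1 hr1
          rw [div_le_iff₀ ha0]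
          have := key r1 hr1 r2 hr2
          linarith [mul_comm r1 a]
        rw [div_le_iff₀ ha0] at h1
        linarith [mul_comm (sInf (S z1)) a]
      have h2 : (sInf (S (a • z1 + c • z2)) - a * sInf (S z1)) / c ≤ sInf (S z2) := by
        apply le_csInf (hSne z2)
        intro r2 hr2
        rw [div_le_iff₀ hc0]
        have := step1 r2 hr2
        linarith [mul_comm r2 c]
      rw [div_le_iff₀ hc0] at h2
      linarith [mul_comm (sInf (S z2)) c]
    simp only [hG]
    have e : a * (sInf (S z1) - (b + ψ g)) + c * (sInf (S z2) - (b + ψ g))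
        = a * sInf (S z1) + c * sInf (S z2) - (b + ψ g) := by
      linear_combination (-(b + ψ g)) * hac
    rw [e]
    linarith [key2]
  -- sublinear hull N
  set T : X → Set ℝ := fun z => {r | ∃ t : ℝ, 0 < t ∧ r = G (t • z) / t} with hT
  have hTne : ∀ z, (T z).Nonempty := fun z => ⟨G ((1:ℝ) • z) / 1, 1, one_pos, rfl⟩
  have hTlb : ∀ z, ∀ r ∈ T z, -G (-z) ≤ r := by
    rintro z r ⟨t, ht, rfl⟩
    have h1t : (0:ℝ) < 1 + t := by linarith
    have hcomb := hGconv (t • z) (-z) (1/(1+t)) (t/(1+t))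
      (by positivity) (by positivity) (by field_simp)
    have hzero : (1/(1+t)) • (t • z) + (t/(1+t)) • (-z) = (0:X) := by
      rw [smul_smul, smul_neg, show (1/(1+t)) * t = t/(1+t) by ring]
      simp
    rw [hzero, hG0] at hcomb
    have h2 : 0 ≤ G (t • z) + t * G (-z) := by
      have h3 := mul_le_mul_of_nonneg_left hcomb h1t.le
      have h4 : (1+t) * (1/(1+t) * G (t • z) + t/(1+t) * G (-z))
          = G (t • z) + t * G (-z) := by field_simp
      rw [h4] at h3
      linarith
    rw [le_div_iff₀ ht]
    nlinarith [h2]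
  have hTbdd : ∀ z, BddBelow (T z) := fun z => ⟨-G (-z), hTlb z⟩
  set N : X → ℝ := fun z => sInf (T z) with hN
  have hNleG : ∀ z, N z ≤ G z := by
    intro z
    have hm : G ((1:ℝ) • z) / 1 ∈ T z := ⟨1, one_pos, rfl⟩
    have := csInf_le (hTbdd z) hm
    simpa [hN] using this
  have hN0 : N 0 = 0 := by
    have hT0 : T 0 = {0} := by
      ext r
      constructor
      · rintro ⟨t, ht, rfl⟩
        simp [smul_zero, hG0]
      · rintro rfl
        exact ⟨1, one_pos, by simp [hG0]⟩
    simp [hN, hT0]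
  have hNhom : ∀ c : ℝ, 0 < c → ∀ z, N (c • z) = c * N z := by
    intro c hc z
    have hTeq : T (c • z) = c • (T z) := by
      ext r
      constructor
      · rintro ⟨t, ht, rfl⟩
        refine ⟨G ((t * c) • z) / (t * c), ⟨t * c, by positivity, rfl⟩, ?_⟩
        simp only [smul_eq_mul, smul_smul, mul_comm t c]
        field_simp
      · rintro ⟨x, ⟨t, ht, rfl⟩, rfl⟩
        refine ⟨t / c, by positivity, ?_⟩
        simp only [smul_eq_mul, smul_smul, div_mul_cancel₀ _ hc.ne']
        field_simp
    simp only [hN, hTeq]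
    rw [Real.sInf_smul_of_nonneg hc.le, smul_eq_mul]
  have hNadd : ∀ z1 z2 : X, N (z1 + z2) ≤ N z1 + N z2 := by
    intro z1 z2
    have key : ∀ r1 ∈ T z1, ∀ r2 ∈ T z2, N (z1 + z2) ≤ r1 + r2 := by
      rintro r1 ⟨t1, ht1, rfl⟩ r2 ⟨t2, ht2, rfl⟩
      have h12 : (0:ℝ) < t1 + t2 := by linarith
      set t : ℝ := t1 * t2 / (t1 + t2) with hts
      have ht : 0 < t := by positivity
      have hmem : G (t • (z1 + z2)) / t ∈ T (z1 + z2) := ⟨t, ht, rfl⟩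
      have hcomb := hGconv (t1 • z1) (t2 • z2) (t2/(t1+t2)) (t1/(t1+t2))
        (by positivity) (by positivity) (by field_simp; ring)
      have hveq : (t2/(t1+t2)) • (t1 • z1) + (t1/(t1+t2)) • (t2 • z2) = t • (z1 + z2) := by
        rw [smul_smul, smul_smul, smul_add, hts]
        rw [show t2/(t1+t2) * t1 = t1 * t2 / (t1+t2) by ring,
            show t1/(t1+t2) * t2 = t1 * t2 / (t1+t2) by ring]
      rw [hveq] at hcomb
      have hdiv : G (t • (z1 + z2)) / t ≤ G (t1 • z1) / t1 + G (t2 • z2) / t2 := by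
        rw [div_le_iff₀ ht]
        have e2 : (G (t1 • z1) / t1 + G (t2 • z2) / t2) * t
            = t2/(t1+t2) * G (t1 • z1) + t1/(t1+t2) * G (t2 • z2) := by
          rw [hts]
          field_simp
        rw [e2]
        exact hcomb
      exact le_trans (by simpa [hN] using csInf_le (hTbdd _) hmem) hdiv
    have step1 : ∀ r1 ∈ T z1, N (z1 + z2) - r1 ≤ N z2 := by
      intro r1 hr1
      simp only [hN]
      apply le_csInf (hTne z2)
      intro r2 hr2
      linarith [key r1 hr1 r2 hr2]
    have step2 : N (z1 + z2) - N z2 ≤ N z1 := by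
      simp only [hN]
      apply le_csInf (hTne z1)
      intro r1 hr1
      have := step1 r1 hr1
      simp only [hN] at this
      linarith
    linarith
  -- Hahn-Banach
  obtain ⟨ξ₀, -, hξle⟩ := exists_extension_of_le_sublinear ⟨⊥, 0⟩ N hNhom hNadd
    (by
      rintro ⟨x, hx⟩
      rcases (Submodule.mem_bot ℝ).1 hx with rfl
      simpa using hN0.ge)
  have hξG : ∀ z, ξ₀ z ≤ G z := fun z => (hξle z).trans (hNleG z)
  -- continuity bound
  set C : ℝ := (‖g‖ + 1) ^ p / p with hC
  have hC0 : 0 ≤ C := by positivity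
  have hub : ∀ z : X, ‖z‖ ≤ 1 → ξ₀ z ≤ C := by
    intro z hz
    have h1 : G z ≤ ψ (g + z) - ψ g := hGF2 z
    have h2 : ψ (g + z) ≤ C := by
      simp only [hψ, hC]
      have : ‖g + z‖ ≤ ‖g‖ + 1 := le_trans (norm_add_le _ _) (by linarith)
      exact (div_le_div_iff_of_pos_right hp0).mpr (Real.rpow_le_rpow (norm_nonneg _) this hp0.le)
    have := hξG z
    have := hψ0 g
    linarith
  have hbound : ∀ x : X, ‖ξ₀ x‖ ≤ C * ‖x‖ := by
    intro x
    rcases eq_or_ne x 0 with rfl | hx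
    · simp
    · have hnx : 0 < ‖x‖ := norm_pos_iff.2 hx
      have hunit : ‖‖x‖⁻¹ • x‖ ≤ 1 := by
        rw [norm_smul, norm_inv, norm_norm, inv_mul_cancel₀ hnx.ne']
      have h1 : ξ₀ (‖x‖⁻¹ • x) ≤ C := hub _ hunit
      have h2 : ξ₀ (-(‖x‖⁻¹ • x)) ≤ C := hub _ (by rwa [norm_neg])
      rw [_root_.map_smul, smul_eq_mul] at h1
      rw [map_neg, _root_.map_smul, smul_eq_mul] at h2
      rw [Real.norm_eq_abs, abs_le]
      constructor
      · rw [neg_le]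
        calc -ξ₀ x = ‖x‖ * (-(‖x‖⁻¹ * ξ₀ x)) := by
              rw [mul_neg, mul_inv_cancel_left₀ hnx.ne']
        _ ≤ ‖x‖ * C := by
            apply mul_le_mul_of_nonneg_left _ hnx.le
            linarith
        _ = C * ‖x‖ := mul_comm _ _
      · calc ξ₀ x = ‖x‖ * (‖x‖⁻¹ * ξ₀ x) := by
              rw [mul_inv_cancel_left₀ hnx.ne']
        _ ≤ ‖x‖ * C := mul_le_mul_of_nonneg_left h1 hnx.le
        _ = C * ‖x‖ := mul_comm _ _
  refine ⟨LinearMap.mkContinuous ξ₀ C hbound, ?_, ?_⟩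
  · intro w
    rcases eq_or_ne (Φ w) ⊤ with hw | hw
    · rw [hw]; exact le_top
    · have h1 : ξ₀ (w - u) ≤ (Φ (u + (w - u))).toReal - b := by
        refine (hξG _).trans (hGF1 (w - u) ?_)
        rwa [show u + (w - u) = w by abel]
      rw [show u + (w - u) = w by abel] at h1
      have happ : (LinearMap.mkContinuous ξ₀ C hbound) (w - u) = ξ₀ (w - u) := rfl
      rw [← hcu, ← EReal.coe_toReal hw (hnb w), happ, ← EReal.coe_add]
      exact EReal.coe_le_coe_iff.2 (by linarith)
  · intro w
    have h1 : ξ₀ (w - g) ≤ ψ (g + (w - g)) - ψ g := (hξG _).trans (hGF2 _)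
    rw [show g + (w - g) = w by abel] at h1
    simp only [hψ] at h1
    have happ : (LinearMap.mkContinuous ξ₀ C hbound) (w - g) = ξ₀ (w - g) := rfl
    show ‖g‖ ^ p / p + (LinearMap.mkContinuous ξ₀ C hbound) (w - g) ≤ ‖w‖ ^ p / p
    rw [happ]
    linarith

lemma min_of_xi (Φ : X → EReal) (p : ℝ)
    (hnn : ∀ x : X, (0 : EReal) ≤ Φ x) (hzero : Φ 0 = 0)
    (u' g' : X) (ξ : X →L[ℝ] ℝ) (h1 : ξ ∈ ERealSubdiff Φ u') (h2 : ξ ∈ Jdual p g') :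
    Φ u' ≠ ⊤ ∧ ∀ w : X, Φ w ≠ ⊤ →
      (Φ u').toReal + ‖g'‖ ^ p / p ≤ (Φ w).toReal + ‖u' + g' - w‖ ^ p / p := by
  have hnb : ∀ x : X, Φ x ≠ ⊥ := fun x => ne_of_gt (lt_of_lt_of_le (by simp) (hnn x))
  have htop : Φ u' ≠ ⊤ := by
    intro h
    have h0 := h1 0
    rw [h, hzero, EReal.top_add_coe] at h0
    simp at h0
  refine ⟨htop, ?_⟩
  intro w hw
  have ha := h1 w
  rw [← EReal.coe_toReal htop (hnb u'), ← EReal.coe_toReal hw (hnb w), ← EReal.coe_add] at ha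
  have haR : (Φ u').toReal + ξ (w - u') ≤ (Φ w).toReal := EReal.coe_le_coe_iff.1 ha
  have hbR := h2 (u' + g' - w)
  have e : u' + g' - w - g' = -(w - u') := by abel
  rw [e, map_neg] at hbR
  linarith


set_option maxHeartbeats 2000000 in
theorem inverse_iteration_compactness (Φ : X → EReal) (p lam : ℝ) (hp : 1 < p)
    (hnn : ∀ x : X, (0 : EReal) ≤ Φ x)
    (hconv : IsConvexE Φ) (hsc : IsStrictConvexOnDom Φ)
    (hlsc : LowerSemicontinuous Φ) (hhom : IsHomog Φ p)
    (hcs : ∀ c : ℝ, IsCompact {x : X | Φ x ≤ (c : EReal)})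
    (hlam : lam = sInf (RayleighSet Φ p)) (hpos : 0 < lam)
    (g : X) (gj : ℕ → X) (hg : Tendsto gj atTop (𝓝 g))
    (uj : ℕ → X)
    (hit : ∀ j : ℕ, ∃ ξ : X →L[ℝ] ℝ, ξ ∈ ERealSubdiff Φ (uj j) ∧ ξ ∈ Jdual p (gj j)) :
    ∃ (ℓ : ℕ → ℕ) (u : X), StrictMono ℓ ∧
      Tendsto (fun n => uj (ℓ n)) atTop (𝓝 u) ∧
      (∃ ξ : X →L[ℝ] ℝ, ξ ∈ ERealSubdiff Φ u ∧ ξ ∈ Jdual p g) ∧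
      Tendsto (fun n => Φ (uj (ℓ n))) atTop (𝓝 (Φ u)) := by
  have hp0 : (0:ℝ) < p := by linarith
  have hnb : ∀ x : X, Φ x ≠ ⊥ := fun x => ne_of_gt (lt_of_lt_of_le (by simp) (hnn x))
  have hzero : Φ 0 = 0 := by
    have h := hhom 0 le_rfl 0
    rw [smul_zero, Real.zero_rpow hp0.ne'] at h
    simpa using h
  set ξj : ℕ → (X →L[ℝ] ℝ) := fun j => (hit j).choose with hξj
  have hsub : ∀ j, ξj j ∈ ERealSubdiff Φ (uj j) := fun j => (hit j).choose_spec.1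
  have hjd : ∀ j, ξj j ∈ Jdual p (gj j) := fun j => (hit j).choose_spec.2
  have hfwd := fun j => min_of_xi Φ p hnn hzero (uj j) (gj j) (ξj j) (hsub j) (hjd j)
  have htopj : ∀ j, Φ (uj j) ≠ ⊤ := fun j => (hfwd j).1
  set a : ℕ → ℝ := fun j => (Φ (uj j)).toReal with ha
  have hminj : ∀ j, ∀ w : X, Φ w ≠ ⊤ →
      a j + ‖gj j‖ ^ p / p ≤ (Φ w).toReal + ‖uj j + gj j - w‖ ^ p / p :=
    fun j => (hfwd j).2
  have ha0 : ∀ j, 0 ≤ a j := fun j => ERealtoReal_nonneg (hnn _)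
  -- Rayleigh quotient lower bound
  have hray : ∀ x : X, Φ x ≠ ⊤ → lam * ‖x‖ ^ p ≤ p * (Φ x).toReal := by
    intro x hx
    rcases eq_or_ne x 0 with rfl | hx0
    · rw [norm_zero, Real.zero_rpow hp0.ne', mul_zero]
      exact mul_nonneg hp0.le (ERealtoReal_nonneg (hnn 0))
    · have hmem : p * (Φ x).toReal / ‖x‖ ^ p ∈ RayleighSet Φ p := ⟨x, hx0, hx, rfl⟩
      have hbdd : BddBelow (RayleighSet Φ p) := by
        refine ⟨0, ?_⟩
        rintro r ⟨y, hy0, hy, rfl⟩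
        have := ERealtoReal_nonneg (hnn y)
        positivity
      have hle := csInf_le hbdd hmem
      rw [← hlam] at hle
      have hnx : (0:ℝ) < ‖x‖ ^ p := Real.rpow_pos_of_pos (norm_pos_iff.2 hx0) p
      rw [le_div_iff₀ hnx] at hle
      linarith
  -- bound on ξj
  have hxiw : ∀ j, ∀ w : X, ξj j w ≤ ‖w‖ ^ p / p + (2 ^ p - 2) * (‖gj j‖ ^ p / p) := by
    intro j w
    have hA := hjd j w
    rw [map_sub] at hA
    have hB := hjd j ((2:ℝ) • gj j)
    have e : (2:ℝ) • gj j - gj j = gj j := by rw [two_smul]; abel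
    rw [e] at hB
    have hn2 : ‖(2:ℝ) • gj j‖ ^ p = 2 ^ p * ‖gj j‖ ^ p := by
      rw [norm_smul, Real.norm_ofNat, Real.mul_rpow (by norm_num) (norm_nonneg _)]
    rw [hn2] at hB
    have h2p : (2:ℝ)^p * ‖gj j‖^p / p = 2^p * (‖gj j‖^p / p) := by ring
    nlinarith [hA, hB]
  have haj : ∀ j, a j ≤ ξj j (uj j) := by
    intro j
    have h0 := hsub j 0
    rw [hzero, ← EReal.coe_toReal (htopj j) (hnb _), ← EReal.coe_add, ← EReal.coe_zero] at h0
    have hR := EReal.coe_le_coe_iff.1 h0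
    rw [zero_sub, map_neg] at hR
    linarith
  -- uniform bound on a j
  set t0 : ℝ := (lam / 2) ^ (1 / (p - 1)) with ht0
  have hlam2 : (0:ℝ) < lam / 2 := by linarith
  have ht0p : 0 < t0 := Real.rpow_pos_of_pos hlam2 _
  have hp1 : p - 1 ≠ 0 := by intro h; rw [sub_eq_zero] at h; exact absurd h.symm hp.ne
  have ht0pow : t0 ^ (p - 1) = lam / 2 := by
    rw [ht0, ← Real.rpow_mul hlam2.le, one_div_mul_cancel hp1, Real.rpow_one]
  have ht0p' : t0 ^ p = t0 ^ (p - 1) * t0 := by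
    have h := (Real.rpow_add ht0p (p-1) 1).symm
    rw [Real.rpow_one] at h
    rw [h, sub_add_cancel]
  have hbd : ∀ j, a j ≤ 2 * ((2 ^ p - 2) * (‖gj j‖ ^ p / p)) / t0 := by
    intro j
    set Cj : ℝ := (2 ^ p - 2) * (‖gj j‖ ^ p / p) with hCj
    have h1 : t0 * ξj j (uj j) ≤ t0 ^ p * ‖uj j‖ ^ p / p + Cj := by
      have hs := hxiw j (t0 • uj j)
      rw [_root_.map_smul, smul_eq_mul] at hs
      have hnsm : ‖t0 • uj j‖ ^ p = t0 ^ p * ‖uj j‖ ^ p := by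
        rw [norm_smul, Real.norm_of_nonneg ht0p.le,
          Real.mul_rpow ht0p.le (norm_nonneg _)]
      rw [hnsm] at hs
      rw [hCj]
      linarith [hs]
    have h2 : ‖uj j‖ ^ p / p ≤ a j / lam := by
      have hr := hray (uj j) (htopj j)
      rw [div_le_div_iff₀ hp0 hpos]
      linarith
    have h3 : t0 ^ p * ‖uj j‖ ^ p / p = t0 * (t0 ^ (p-1) * (‖uj j‖ ^ p / p)) := by
      rw [ht0p']; ring
    have h4 : t0 ^ (p-1) * (‖uj j‖ ^ p / p) ≤ (lam / 2) * (a j / lam) := by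
      rw [ht0pow]
      exact mul_le_mul_of_nonneg_left h2 hlam2.le
    have h5 : (lam / 2) * (a j / lam) = a j / 2 := by
      field_simp
    have h6 : t0 * a j ≤ t0 * ξj j (uj j) :=
      mul_le_mul_of_nonneg_left (haj j) ht0p.le
    have h7 : t0 * a j ≤ t0 * (a j / 2) + Cj := by
      rw [h3] at h1
      have := mul_le_mul_of_nonneg_left (h4.trans_eq h5) ht0p.le
      linarith
    rw [le_div_iff₀ ht0p]
    nlinarith [h7]
  -- bound on gj norms
  obtain ⟨B, hB⟩ : ∃ B : ℝ, ∀ j, ‖gj j‖ ≤ B := by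
    obtain ⟨B, hB⟩ := (hg.norm).bddAbove_range
    exact ⟨B, fun j => hB ⟨j, rfl⟩⟩
  have hB0 : (0:ℝ) ≤ B := le_trans (norm_nonneg _) (hB 0)
  have h2p2 : (0:ℝ) ≤ 2 ^ p - 2 := by
    have : (2:ℝ) ^ (1:ℝ) ≤ 2 ^ p := Real.rpow_le_rpow_of_exponent_le (by norm_num) hp.le
    rw [Real.rpow_one] at this
    linarith
  set M : ℝ := 2 * ((2 ^ p - 2) * (B ^ p / p)) / t0 with hM
  have haM : ∀ j, a j ≤ M := by
    intro j
    refine (hbd j).trans ?_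
    rw [hM, div_le_div_iff_of_pos_right ht0p]
    have : ‖gj j‖ ^ p ≤ B ^ p := Real.rpow_le_rpow (norm_nonneg _) (hB j) hp0.le
    have h9 : ‖gj j‖ ^ p / p ≤ B ^ p / p := (div_le_div_iff_of_pos_right hp0).mpr this
    nlinarith [h9]
  -- extract subsequences
  have hcoea : ∀ j, Φ (uj j) = ((a j : ℝ) : EReal) :=
    fun j => (EReal.coe_toReal (htopj j) (hnb _)).symm
  have hmemK : ∀ j, uj j ∈ {x : X | Φ x ≤ (M : EReal)} := by
    intro j
    show Φ (uj j) ≤ (M : EReal)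
    rw [hcoea j]
    exact EReal.coe_le_coe_iff.2 (haM j)
  obtain ⟨u, huK, φ1, hφ1, hconv1⟩ := (hcs M).tendsto_subseq hmemK
  have hmemI : ∀ n, a (φ1 n) ∈ Icc (0:ℝ) M := fun n => ⟨ha0 _, haM _⟩
  obtain ⟨A, hAI, φ2, hφ2, hconv2⟩ := (isCompact_Icc (a := (0:ℝ)) (b := M)).tendsto_subseq hmemI
  set ℓ : ℕ → ℕ := φ1 ∘ φ2 with hℓdef
  have hℓ : StrictMono ℓ := hφ1.comp hφ2
  have hU : Tendsto (fun n => uj (ℓ n)) atTop (𝓝 u) := hconv1.comp hφ2.tendsto_atTop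
  have hAconv : Tendsto (fun n => a (ℓ n)) atTop (𝓝 A) := hconv2
  have hgl : Tendsto (fun n => gj (ℓ n)) atTop (𝓝 g) := hg.comp hℓ.tendsto_atTop
  -- lower semicontinuity
  have hlscA : Φ u ≤ (A : EReal) := by
    by_contra hcon
    push_neg at hcon
    obtain ⟨y, hy1, hy2⟩ := exists_between hcon
    have hev := hU.eventually (hlsc u y hy2)
    have hcoe : Tendsto (fun n => ((a (ℓ n) : ℝ) : EReal)) atTop (𝓝 ((A : ℝ) : EReal)) :=
      EReal.tendsto_coe.2 hAconv
    have hyA : y ≤ ((A : ℝ) : EReal) := by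
      refine ge_of_tendsto hcoe ?_
      refine hev.mono fun n hn => ?_
      rw [← hcoea (ℓ n)]
      exact hn.le
    exact absurd (lt_of_le_of_lt hyA hy1) (lt_irrefl _)
  have hΦu : Φ u ≠ ⊤ := ne_top_of_le_ne_top (EReal.coe_ne_top _) hlscA
  have hbuA : (Φ u).toReal ≤ A := by
    simpa using EReal.toReal_le_toReal hlscA (hnb u) (EReal.coe_ne_top _)
  -- continuity of the norm power
  have hψc : Continuous (fun y : X => ‖y‖ ^ p / p) :=
    (continuous_norm.rpow_const (fun x => Or.inr hp0.le)).div_const p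
  have hvt : Tendsto (fun n => uj (ℓ n) + gj (ℓ n) - u) atTop (𝓝 g) := by
    have h := (hU.add hgl).sub (tendsto_const_nhds (x := u))
    have e : u + g - u = g := by abel
    rwa [e] at h
  -- upper bound: A ≤ (Φ u).toReal
  have hup : A ≤ (Φ u).toReal := by
    have hle : ∀ n, a (ℓ n) + ‖gj (ℓ n)‖ ^ p / p ≤
        (Φ u).toReal + ‖uj (ℓ n) + gj (ℓ n) - u‖ ^ p / p :=
      fun n => hminj (ℓ n) u hΦu
    have hl1 : Tendsto (fun n => a (ℓ n) + ‖gj (ℓ n)‖ ^ p / p) atTop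
        (𝓝 (A + ‖g‖ ^ p / p)) := hAconv.add ((hψc.tendsto g).comp hgl)
    have hl2 : Tendsto (fun n => (Φ u).toReal + ‖uj (ℓ n) + gj (ℓ n) - u‖ ^ p / p) atTop
        (𝓝 ((Φ u).toReal + ‖g‖ ^ p / p)) :=
      tendsto_const_nhds.add ((hψc.tendsto g).comp hvt)
    have := le_of_tendsto_of_tendsto' hl1 hl2 hle
    linarith
  have hbA : (Φ u).toReal = A := le_antisymm hbuA hup
  have hΦcu : Φ u = ((A : ℝ) : EReal) := by
    rw [← hbA]
    exact (EReal.coe_toReal hΦu (hnb u)).symm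
  -- Phi convergence
  have hΦconv : Tendsto (fun n => Φ (uj (ℓ n))) atTop (𝓝 (Φ u)) := by
    have he : (fun n => Φ (uj (ℓ n))) = fun n => ((a (ℓ n) : ℝ) : EReal) :=
      funext fun n => hcoea (ℓ n)
    rw [he, hΦcu]
    exact EReal.tendsto_coe.2 hAconv
  -- minimality at the limit
  have hminu : ∀ w : X, (((Φ u).toReal + ‖g‖ ^ p / p : ℝ) : EReal) ≤
      Φ w + ((‖u + g - w‖ ^ p / p : ℝ) : EReal) := by
    intro w
    rcases eq_or_ne (Φ w) ⊤ with hw | hw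
    · rw [hw, EReal.top_add_coe]
      exact le_top
    · have hle : ∀ n, a (ℓ n) + ‖gj (ℓ n)‖ ^ p / p ≤
          (Φ w).toReal + ‖uj (ℓ n) + gj (ℓ n) - w‖ ^ p / p :=
        fun n => hminj (ℓ n) w hw
      have hvtw : Tendsto (fun n => uj (ℓ n) + gj (ℓ n) - w) atTop (𝓝 (u + g - w)) :=
        (hU.add hgl).sub (tendsto_const_nhds (x := w))
      have hl1 : Tendsto (fun n => a (ℓ n) + ‖gj (ℓ n)‖ ^ p / p) atTop
          (𝓝 (A + ‖g‖ ^ p / p)) := hAconv.add ((hψc.tendsto g).comp hgl)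
      have hl2 : Tendsto (fun n => (Φ w).toReal + ‖uj (ℓ n) + gj (ℓ n) - w‖ ^ p / p) atTop
          (𝓝 ((Φ w).toReal + ‖u + g - w‖ ^ p / p)) :=
        tendsto_const_nhds.add ((hψc.tendsto (u + g - w)).comp hvtw)
      have hR := le_of_tendsto_of_tendsto' hl1 hl2 hle
      rw [← EReal.coe_toReal hw (hnb w), ← EReal.coe_add]
      refine EReal.coe_le_coe_iff.2 ?_
      rw [hbA]
      linarith
  obtain ⟨ξ, hξ1, hξ2⟩ := exists_xi_of_min Φ p hp hnn hconv u g hΦu hminu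
  exact ⟨ℓ, u, hℓ, hU, ⟨ξ, hξ1, hξ2⟩, hΦconv⟩
end
end

section
/- For the local slope of Ψ(w) = ‖w‖^p/p on a Banach space X, one has |∂Ψ|(w) = ‖w‖^{p−1} for every w ∈ X. -/
open Filter Set MeasureTheory Topology
open scoped ENNReal NNReal

noncomputable section

variable {X : Type*} [NormedAddCommGroup X] [NormedSpace ℝ X] [CompleteSpace X]

lemma key_ineq {p : ℝ} (hp : 1 < p) {a b : ℝ} (ha : 0 ≤ a) (hb : 0 ≤ b) :
    a ^ p - b ^ p ≤ p * a ^ (p - 1) * (a - b) := by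
  rcases eq_or_lt_of_le ha with rfl | ha'
  · rw [Real.zero_rpow (by positivity), Real.zero_rpow (by linarith)]
    have : (0:ℝ) ≤ b ^ p := Real.rpow_nonneg hb p
    nlinarith
  · have hs : (-1:ℝ) ≤ b / a - 1 := by
      have : 0 ≤ b / a := div_nonneg hb ha'.le
      linarith
    have hB := one_add_mul_self_le_rpow_one_add hs hp.le
    rw [add_sub_cancel] at hB
    rw [Real.div_rpow hb ha'.le p] at hB
    have hap : (0:ℝ) < a ^ p := Real.rpow_pos_of_pos ha' p
    have hB2 := mul_le_mul_of_nonneg_right hB hap.le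
    rw [div_mul_cancel₀ _ hap.ne'] at hB2
    have hap1 : a ^ (p - 1) * a = a ^ p := by
      rw [Real.rpow_sub_one ha'.ne', div_mul_cancel₀ _ ha'.ne']
    have h3 : (1 + p * (b / a - 1)) * a ^ p = a ^ p + p * a ^ (p - 1) * (b - a) := by
      rw [← hap1]; field_simp
    rw [h3] at hB2
    linarith

theorem localSlope_norm_power (p : ℝ) (hp : 1 < p) (w : X) :
    localSlope (fun x : X => ((‖x‖ ^ p / p : ℝ) : EReal)) w =
      ENNReal.ofReal (‖w‖ ^ (p - 1)) := by
  have hp0 : (0:ℝ) < p := by linarith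
  set q : ℝ := ‖w‖ ^ (p - 1) with hq
  have hq0 : 0 ≤ q := Real.rpow_nonneg (norm_nonneg w) _
  have hLS : localSlope (fun x : X => ((‖x‖ ^ p / p : ℝ) : EReal)) w =
      Filter.limsup (fun z : X =>
        ENNReal.ofReal ((‖w‖ ^ p / p - ‖w + z‖ ^ p / p) / ‖z‖)) (𝓝[≠] (0 : X)) := by
    simp only [localSlope, ← EReal.coe_sub, EReal.toReal_coe]
  set f : X → ℝ≥0∞ := fun z =>
    ENNReal.ofReal ((‖w‖ ^ p / p - ‖w + z‖ ^ p / p) / ‖z‖) with hf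
  rw [hLS]
  -- upper bound
  have hub : Filter.limsup f (𝓝[≠] (0 : X)) ≤ ENNReal.ofReal q := by
    refine Filter.limsup_le_of_le (by isBoundedDefault) ?_
    apply Filter.Eventually.of_forall
    intro z
    apply ENNReal.ofReal_le_ofReal
    rcases eq_or_ne z 0 with rfl | hz
    · simp [hq0]
    · have hz' : (0:ℝ) < ‖z‖ := norm_pos_iff.mpr hz
      have hk := key_ineq hp (norm_nonneg w) (norm_nonneg (w + z))
      have hd : ‖w‖ - ‖w + z‖ ≤ ‖z‖ := by
        have := norm_sub_norm_le w (w + z)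
        simpa using this
      have h2 : ‖w‖ ^ p - ‖w + z‖ ^ p ≤ p * q * ‖z‖ := by
        calc ‖w‖ ^ p - ‖w + z‖ ^ p ≤ p * q * (‖w‖ - ‖w + z‖) := hk
        _ ≤ p * q * ‖z‖ := by
            apply mul_le_mul_of_nonneg_left hd (by positivity)
      rw [div_sub_div_same, div_div, div_le_iff₀ (by positivity)]
      linarith
  refine le_antisymm hub ?_
  rcases eq_or_ne w 0 with rfl | hw
  · have : q = 0 := by
      rw [hq, norm_zero, Real.zero_rpow (by linarith)]
    rw [this]
    simp
  -- lower bound for w ≠ 0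
  have hw' : (0:ℝ) < ‖w‖ := norm_pos_iff.mpr hw
  set z : ℝ → X := fun t => (-t) • w with hz
  have hmap : Tendsto z (𝓝[>] (0:ℝ)) (𝓝[≠] (0 : X)) := by
    rw [tendsto_nhdsWithin_iff]
    constructor
    · have h1 : Tendsto z (𝓝 (0:ℝ)) (𝓝 ((-(0:ℝ)) • w)) := by
        exact (continuous_id.neg.smul continuous_const).tendsto 0
      rw [neg_zero, zero_smul] at h1
      exact h1.mono_left nhdsWithin_le_nhds
    · filter_upwards [self_mem_nhdsWithin] with t ht
      simp only [mem_compl_iff, mem_singleton_iff, hz]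
      intro h
      rcases smul_eq_zero.mp h with h' | h'
      · exact absurd (neg_eq_zero.mp h') (ne_of_gt ht)
      · exact hw h'
  -- derivative computation
  have hder : HasDerivAt (fun t : ℝ => (1 - t) ^ p) (-p) 0 := by
    have h1 : HasDerivAt (fun x : ℝ => x ^ p) (p * (1:ℝ) ^ (p - 1)) 1 :=
      Real.hasDerivAt_rpow_const (Or.inl one_ne_zero)
    have h2 : HasDerivAt (fun t : ℝ => 1 - t) (-1) 0 := (hasDerivAt_id (0:ℝ)).const_sub 1
    have h1' : HasDerivAt (fun x : ℝ => x ^ p) (p * (1:ℝ) ^ (p - 1)) (1 - 0) := by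
      simpa using h1
    have h3 := h1'.comp 0 h2
    simp only [Function.comp_def] at h3
    rw [Real.one_rpow, mul_one, mul_neg_one] at h3
    exact h3
  have hslope : Tendsto (fun t : ℝ => ((1 - t) ^ p - 1) / t) (𝓝[>] (0:ℝ)) (𝓝 (-p)) := by
    have h4 := hasDerivAt_iff_tendsto_slope.mp hder
    have h5 : Tendsto (slope (fun t : ℝ => (1 - t) ^ p) 0) (𝓝[>] (0:ℝ)) (𝓝 (-p)) :=
      h4.mono_left (nhdsWithin_mono 0 (fun x hx => ne_of_gt hx))
    refine h5.congr' ?_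
    filter_upwards [self_mem_nhdsWithin] with t ht
    rw [slope_def_field]
    simp [Real.one_rpow]
  set E : ℝ → ℝ := fun t => q * ((1 - (1 - t) ^ p) / (p * t)) with hE
  have hEtend : Tendsto E (𝓝[>] (0:ℝ)) (𝓝 q) := by
    have haux : ∀ t : ℝ, -(((1 - t) ^ p - 1) / t) / p = (1 - (1 - t) ^ p) / (p * t) := by
      intro t
      rw [← neg_div, div_div, neg_sub, mul_comm t p]
    have hEeq : E = fun t => q * (-(((1 - t) ^ p - 1) / t) / p) := by
      funext t
      rw [hE, haux]
    rw [hEeq]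
    have := ((hslope.neg).div_const p).const_mul q
    rw [neg_neg, div_self hp0.ne', mul_one] at this
    exact this
  have hTend : Tendsto (f ∘ z) (𝓝[>] (0:ℝ)) (𝓝 (ENNReal.ofReal q)) := by
    refine (ENNReal.tendsto_ofReal hEtend).congr' ?_
    filter_upwards [Ioo_mem_nhdsGT one_pos] with t ht
    have ht0 : 0 < t := ht.1
    have ht1 : t < 1 := ht.2
    have hwz : w + z t = (1 - t) • w := by
      rw [hz]
      simp only
      rw [sub_smul, one_smul, neg_smul]
      abel
    have hn1 : ‖z t‖ = t * ‖w‖ := by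
      rw [hz]; simp only [norm_smul, norm_neg, Real.norm_eq_abs, abs_of_pos ht0]
    have hn2 : ‖(1 - t) • w‖ ^ p = (1 - t) ^ p * ‖w‖ ^ p := by
      rw [norm_smul, Real.norm_eq_abs, abs_of_pos (by linarith : (0:ℝ) < 1 - t),
        Real.mul_rpow (by linarith) (norm_nonneg w)]
    show ENNReal.ofReal (E t) = f (z t)
    rw [hf]
    simp only [hwz, hn1, hn2]
    congr 1
    rw [hE, hq, Real.rpow_sub_one hw'.ne']
    field_simp
  have hNB : (Filter.map z (𝓝[>] (0:ℝ))).NeBot := Filter.map_neBot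
  have heq1 : Filter.limsup f (Filter.map z (𝓝[>] (0:ℝ))) = ENNReal.ofReal q := by
    have : Filter.limsup f (Filter.map z (𝓝[>] (0:ℝ))) = Filter.limsup (f ∘ z) (𝓝[>] (0:ℝ)) := by
      simp only [Filter.limsup, Filter.map_map]
    rw [this]
    exact hTend.limsup_eq
  calc ENNReal.ofReal q = Filter.limsup f (Filter.map z (𝓝[>] (0:ℝ))) := heq1.symm
  _ ≤ Filter.limsup f (𝓝[≠] (0:X)) := Filter.limsup_le_limsup_of_le hmap
end
end
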